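/- arXiv:0803.2320 — 13 statements merged into one kernel-verified Lean document; each statement's English description precedes it below -/
import Mathlib

section
/- To verify that f : X → (Z, μ) is fragmented, it suffices to check the fragmentability condition only for closed nonempty subsets A ⊆ X and only for entourages ε belonging to a subbase of the uniformity μ (a family whose finite intersections form a base of μ). -/
/-- A map `f : X → Z` from a topological space to a uniform space is *fragmented* if for
every nonempty subset `A` of `X` and every entourage `ε` of `Z` there is an open set `O`
such that `O ∩ A` is nonempty and `f (O ∩ A)` is `ε`-small. -/
def Fragmented {X Z : Type*} [TopologicalSpace X] [UniformSpace Z] (f : X → Z) : Prop :=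
  ∀ A : Set X, A.Nonempty → ∀ ε ∈ uniformity Z, ∃ O : Set X, IsOpen O ∧ (O ∩ A).Nonempty ∧
    ∀ x ∈ O ∩ A, ∀ y ∈ O ∩ A, (f x, f y) ∈ ε

/-- To verify fragmentability it suffices to check the condition only for *closed*
nonempty subsets `A ⊆ X` and for entourages `ε` belonging to a *subbase* `γ` of the
uniformity (i.e. a family of entourages whose finite intersections form a base of the
uniformity). -/
theorem fragmented_of_closed_and_subbase {X Z : Type*} [TopologicalSpace X] [UniformSpace Z]
    (f : X → Z) (γ : Set (Set (Z × Z)))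
    (hγ : ∀ ε ∈ γ, ε ∈ uniformity Z)
    (hsubbase : ∀ ε ∈ uniformity Z, ∃ t : Set (Set (Z × Z)), t.Finite ∧ t ⊆ γ ∧ ⋂₀ t ⊆ ε)
    (h : ∀ A : Set X, IsClosed A → A.Nonempty → ∀ ε ∈ γ,
      ∃ O : Set X, IsOpen O ∧ (O ∩ A).Nonempty ∧
        ∀ x ∈ O ∩ A, ∀ y ∈ O ∩ A, (f x, f y) ∈ ε) :
    Fragmented f := by
  -- Step 1: extend from closed sets to arbitrary nonempty sets, using closures.
  have key : ∀ A : Set X, A.Nonempty → ∀ ε ∈ γ,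
      ∃ O : Set X, IsOpen O ∧ (O ∩ A).Nonempty ∧
        ∀ x ∈ O ∩ A, ∀ y ∈ O ∩ A, (f x, f y) ∈ ε := by
    intro A hA ε hε
    obtain ⟨O, hO, hne, hsmall⟩ := h (closure A) isClosed_closure hA.closure ε hε
    refine ⟨O, hO, ?_, ?_⟩
    · obtain ⟨x, hxO, hxc⟩ := hne
      exact mem_closure_iff.mp hxc O hO hxO
    · intro x hx y hy
      exact hsmall x ⟨hx.1, subset_closure hx.2⟩ y ⟨hy.1, subset_closure hy.2⟩
  -- Step 2: induction over finite subfamilies of γ.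
  have key2 : ∀ t : Set (Set (Z × Z)), t.Finite → t ⊆ γ → ∀ A : Set X, A.Nonempty →
      ∃ O : Set X, IsOpen O ∧ (O ∩ A).Nonempty ∧
        ∀ x ∈ O ∩ A, ∀ y ∈ O ∩ A, (f x, f y) ∈ ⋂₀ t := by
    intro t ht
    refine Set.Finite.induction_on t ht ?_ ?_
    · intro _ A hA
      exact ⟨Set.univ, isOpen_univ, by simpa using hA, by simp⟩
    · intro ε₀ s hε₀ hs ih hsub A hA
      obtain ⟨O, hO, hne, hsmall⟩ := key A hA ε₀ (hsub (Set.mem_insert _ _))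
      obtain ⟨O', hO', hne', hsmall'⟩ :=
        ih (fun u hu => hsub (Set.mem_insert_of_mem _ hu)) (O ∩ A) hne
      refine ⟨O' ∩ O, hO'.inter hO, ?_, ?_⟩
      · simpa [Set.inter_assoc] using hne'
      · intro x hx y hy
        rw [Set.sInter_insert]
        refine ⟨hsmall x ⟨hx.1.2, hx.2⟩ y ⟨hy.1.2, hy.2⟩, ?_⟩
        exact hsmall' x ⟨hx.1.1, hx.1.2, hx.2⟩ y ⟨hy.1.1, hy.1.2, hy.2⟩
  intro A hA ε hεU
  obtain ⟨t, htf, htγ, hεt⟩ := hsubbase ε hεU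
  obtain ⟨O, hO, hne, hsmall⟩ := key2 t htf htγ A hA
  exact ⟨O, hO, hne, fun x hx y hy => hεt (hsmall x hx y hy)⟩
end

section
/- Let p : X → Y be a map from a topological space X into a compact Hausdorff space Y, and let {f_i : Y → Z_i} be a family of continuous maps into Hausdorff uniform spaces Z_i which separates the points of Y. If each composition f_i ∘ p : X → Z_i is fragmented, then p : X → Y is fragmented (with respect to the unique compatible uniformity on Y). -/
/-- Finite families of fragmented maps can be simultaneously fragmented. -/
lemma fragmented_finset {X : Type*} [TopologicalSpace X] {ι : Type*} {Z : ι → Type*}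
    [∀ i, UniformSpace (Z i)] (g : ∀ i, X → Z i) (hg : ∀ i, Fragmented (g i))
    (s : Finset ι) (W : ∀ i, Set (Z i × Z i)) (hW : ∀ i ∈ s, W i ∈ uniformity (Z i))
    (A : Set X) (hA : A.Nonempty) :
    ∃ O : Set X, IsOpen O ∧ (O ∩ A).Nonempty ∧
      ∀ x ∈ O ∩ A, ∀ y ∈ O ∩ A, ∀ i ∈ s, (g i x, g i y) ∈ W i := by
  classical
  induction s using Finset.induction_on with
  | empty =>
      exact ⟨Set.univ, isOpen_univ, by simpa using hA, by simp⟩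
  | @insert i s hi IH =>
      obtain ⟨O, hO, hOA, hsmall⟩ := IH (fun j hj => hW j (Finset.mem_insert_of_mem hj))
      obtain ⟨O', hO', hO'A, hsmall'⟩ := hg i (O ∩ A) hOA (W i)
        (hW i (Finset.mem_insert_self i s))
      refine ⟨O ∩ O', hO.inter hO', ?_, ?_⟩
      · obtain ⟨x, hx1, hx2⟩ := hO'A
        exact ⟨x, ⟨hx2.1, hx1⟩, hx2.2⟩
      · rintro x ⟨⟨hxO, hxO'⟩, hxA⟩ y ⟨⟨hyO, hyO'⟩, hyA⟩ j hj
        rcases Finset.mem_insert.1 hj with rfl | hj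
        · exact hsmall' x ⟨hxO', hxO, hxA⟩ y ⟨hyO', hyO, hyA⟩
        · exact hsmall x ⟨hxO, hxA⟩ y ⟨hyO, hyA⟩ j hj

/-- Let `p : X → Y` map a topological space into a compact Hausdorff space `Y`
(carrying its unique compatible uniformity), and let `{f i : Y → Z i}` be a point-separating
family of continuous maps into Hausdorff uniform spaces. If each `f i ∘ p` is fragmented,
then `p` is fragmented. -/
theorem fragmented_of_separating_family {X Y : Type*} {ι : Type*} {Z : ι → Type*}
    [TopologicalSpace X] [UniformSpace Y] [CompactSpace Y] [T2Space Y]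
    [∀ i, UniformSpace (Z i)] [∀ i, T2Space (Z i)]
    (p : X → Y) (f : ∀ i, Y → Z i) (hf : ∀ i, Continuous (f i))
    (hsep : ∀ y y' : Y, (∀ i, f i y = f i y') → y = y')
    (hfp : ∀ i, Fragmented (f i ∘ p)) :
    Fragmented p := by
  classical
  set F : Y → ∀ i, Z i := fun y i => f i y with hF
  have hFc : Continuous F := continuous_pi hf
  have hFinj : Function.Injective F := fun y y' h => hsep y y' (fun i => congrFun h i)
  have hemb : Topology.IsEmbedding F := (hFc.isClosedEmbedding hFinj).toIsEmbedding
  -- the uniformity of Y is the comap of the product uniformity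
  have huniq : ‹UniformSpace Y› = UniformSpace.comap F inferInstance := by
    apply unique_uniformity_of_compact rfl
    rw [UniformSpace.toTopologicalSpace_comap]
    exact hemb.eq_induced.symm
  have hcomap : uniformity Y = Filter.comap (Prod.map F F) (uniformity (∀ i, Z i)) := by
    conv_lhs => rw [huniq]
    rfl
  intro A hA ε hε
  rw [hcomap, Filter.mem_comap] at hε
  obtain ⟨V, hV, hVε⟩ := hε
  rw [Pi.uniformity] at hV
  obtain ⟨I, hIfin, V', hV', -, hVI, -⟩ := Filter.mem_iInf'.1 hV
  choose W hW hWV' using fun i => Filter.mem_comap.1 (hV' i)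
  obtain ⟨O, hO, hOA, hsmall⟩ := fragmented_finset (fun i => f i ∘ p) hfp hIfin.toFinset W
    (fun i _ => hW i) A hA
  refine ⟨O, hO, hOA, fun x hx y hy => ?_⟩
  apply hVε
  have : ((F (p x), F (p y)) : (∀ i, Z i) × (∀ i, Z i)) ∈ V := by
    rw [hVI]
    refine Set.mem_iInter₂.2 fun i hi => ?_
    exact hWV' i (hsmall x hx y hy i (hIfin.mem_toFinset.2 hi))
  exact this
end

section
/- Let X, X' be compact Hausdorff spaces, (Y, μ) and (Y', μ') uniform spaces, α : X → X' a continuous surjection, ν : Y → Y' uniformly continuous, and φ : X → Y, φ' : X' → Y' maps with φ' ∘ α = ν ∘ φ. If φ is fragmented then φ' is fragmented. -/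
open Set

/-- Auxiliary Zorn lemma: a continuous map from a compact space whose image covers a set `B`
admits a minimal closed subset whose image still covers `B`. -/
lemma exists_minimal_closed_cover {X X' : Type*} [TopologicalSpace X] [CompactSpace X]
    [TopologicalSpace X'] [T1Space X'] {α : X → X'} (hαc : Continuous α)
    (hαs : Function.Surjective α) (B : Set X') :
    ∃ M : Set X, IsClosed M ∧ B ⊆ α '' M ∧
      ∀ M₀ ⊆ M, IsClosed M₀ → B ⊆ α '' M₀ → M₀ = M := by
  let S : Set (Set X) := {M | IsClosed M ∧ B ⊆ α '' M}
  suffices h : ∀ (C : Set (Set X)) (_ : C ⊆ S) (_ : IsChain (· ⊆ ·) C),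
      ∃ s ∈ S, ∀ c ∈ C, s ⊆ c by
    rcases zorn_superset S h with ⟨M, hM⟩
    obtain ⟨M_closed, M_cov⟩ := hM.prop
    refine ⟨M, M_closed, M_cov, fun M₀ hsub h₀closed h₀cov => hM.eq_of_subset ⟨h₀closed, h₀cov⟩ hsub⟩
  intro C C_sub C_chain
  refine ⟨iInter (fun c : C => c), ⟨isClosed_iInter fun ⟨_, h⟩ => (C_sub h).left, ?_⟩,
    fun c hc _ h => mem_iInter.mp h ⟨c, hc⟩⟩
  by_cases hC : Nonempty C
  · intro b hb
    have : (⋂ c : C, ((c : Set X) ∩ α ⁻¹' {b})).Nonempty := by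
      refine IsCompact.nonempty_iInter_of_directed_nonempty_isCompact_isClosed _ ?_
        (fun c => ?_) (fun c => IsClosed.isCompact ?_) (fun c => ?_)
      · replace C_chain : IsChain (· ⊇ ·) C := C_chain.symm
        have : ∀ s t : Set X, s ⊇ t → s ∩ α ⁻¹' {b} ⊇ t ∩ α ⁻¹' {b} := fun _ _ h => inter_subset_inter_left (α ⁻¹' {b}) h
        exact Directed.mono_comp (· ⊇ ·) (fun s t h => this s t h) (directedOn_iff_directed.mp C_chain.directedOn)
      · rcases (C_sub c.2).2 hb with ⟨x, hx, rfl⟩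
        exact ⟨x, hx, rfl⟩
      all_goals exact (C_sub c.2).left.inter <| (T1Space.t1 b).preimage hαc
    rcases this with ⟨x, hx⟩
    refine ⟨x, mem_iInter.mpr fun c => (mem_iInter.mp hx c).1, ?_⟩
    have := (mem_iInter.mp hx (Classical.arbitrary C)).2
    simpa using this
  · rw [@iInter_of_empty _ _ <| not_nonempty_iff.mp hC]
    intro b _
    rcases hαs b with ⟨x, rfl⟩
    exact ⟨x, trivial, rfl⟩

/-- If `α : X → X'` is a continuous surjection of compact Hausdorff spaces,
`ν : Y → Y'` is uniformly continuous, `φ' ∘ α = ν ∘ φ`, and `φ` is fragmented,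
then `φ'` is fragmented. -/
theorem fragmented_quotient {X X' Y Y' : Type*}
    [TopologicalSpace X] [CompactSpace X] [T2Space X]
    [TopologicalSpace X'] [CompactSpace X'] [T2Space X']
    [UniformSpace Y] [UniformSpace Y']
    (α : X → X') (hαc : Continuous α) (hαs : Function.Surjective α)
    (ν : Y → Y') (hν : UniformContinuous ν)
    (φ : X → Y) (φ' : X' → Y') (hcomm : φ' ∘ α = ν ∘ φ)
    (hφ : Fragmented φ) : Fragmented φ' := by
  intro A' hA' ε' hε'
  set B : Set X' := closure A' with hB
  obtain ⟨M, M_closed, M_cov, M_min⟩ := exists_minimal_closed_cover hαc hαs B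
  -- M is nonempty
  have hMne : M.Nonempty := by
    rcases hA' with ⟨a, ha⟩
    rcases M_cov (subset_closure ha) with ⟨m, hm, _⟩
    exact ⟨m, hm⟩
  -- apply fragmentation of φ to M with pulled-back entourage
  have hε : Prod.map ν ν ⁻¹' ε' ∈ uniformity Y := hν hε'
  obtain ⟨O, O_open, ⟨m₀, hm₀⟩, hsmall⟩ := hφ M hMne _ hε
  -- K := α '' (M \ O) is closed
  have hMOcl : IsClosed (M \ O) := M_closed.sdiff O_open
  have hKcl : IsClosed (α '' (M \ O)) :=
    (hMOcl.isCompact.image hαc).isClosed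
  set K := α '' (M \ O) with hK
  refine ⟨Kᶜ, hKcl.isOpen_compl, ?_, ?_⟩
  · -- nonemptiness : find b ∈ B \ K, then use b ∈ closure A'
    have hne : ¬ B ⊆ K := by
      intro hBK
      have : M \ O = M := M_min (M \ O) diff_subset hMOcl hBK
      have := this ▸ hm₀
      exact (this.2 : m₀ ∈ M \ O).2 hm₀.1
    rcases not_subset.mp hne with ⟨b, hbB, hbK⟩
    rcases (mem_closure_iff.mp hbB) Kᶜ hKcl.isOpen_compl hbK with ⟨a, haK, haA⟩
    exact ⟨a, haK, haA⟩
  · -- smallness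
    have key : ∀ x' ∈ Kᶜ ∩ A', ∃ m ∈ O ∩ M, α m = x' := by
      rintro x' ⟨hxK, hxA⟩
      rcases M_cov (subset_closure hxA) with ⟨m, hmM, rfl⟩
      refine ⟨m, ⟨?_, hmM⟩, rfl⟩
      by_contra hmO
      exact hxK ⟨m, ⟨hmM, hmO⟩, rfl⟩
    rintro x hx y hy
    rcases key x hx with ⟨m₁, hm₁, rfl⟩
    rcases key y hy with ⟨m₂, hm₂, rfl⟩
    have h1 : φ' (α m₁) = ν (φ m₁) := congrFun hcomm m₁
    have h2 : φ' (α m₂) = ν (φ m₂) := congrFun hcomm m₂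
    rw [h1, h2]
    exact hsmall m₁ hm₁ m₂ hm₂
end

section
/- Let α : X → X' be a continuous surjection between compact Hausdorff spaces, (Y, μ) a uniform space, and f : X → Y, f' : X' → Y maps with f' ∘ α = f. Then f is fragmented if and only if f' is fragmented. -/
/-- For a continuous surjection `α : X → X'` of compact Hausdorff spaces and maps
`f : X → Y`, `f' : X' → Y` with `f' ∘ α = f`, the map `f` is fragmented iff `f'` is. -/
theorem fragmented_factor_iff {X X' Y : Type*}
    [TopologicalSpace X] [CompactSpace X] [T2Space X]
    [TopologicalSpace X'] [CompactSpace X'] [T2Space X']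
    [UniformSpace Y]
    (α : X → X') (hαc : Continuous α) (hαs : Function.Surjective α)
    (f : X → Y) (f' : X' → Y) (hcomm : f' ∘ α = f) :
    Fragmented f ↔ Fragmented f' := by
  have hfe : ∀ x, f x = f' (α x) := fun x => by rw [← hcomm]; rfl
  constructor
  · -- hard direction
    intro hf A₀ hA₀ ε hε
    -- first do the case of a closed set, namely `closure A₀`
    set C := closure A₀ with hC
    have hCcl : IsClosed C := isClosed_closure
    have hCne : C.Nonempty := hA₀.closure
    obtain ⟨O, hOo, hOne, hOsm⟩ :
        ∃ O : Set X', IsOpen O ∧ (O ∩ C).Nonempty ∧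
          ∀ x ∈ O ∩ C, ∀ y ∈ O ∩ C, (f' x, f' y) ∈ ε := by
      -- Zorn: a minimal closed `B ⊆ α ⁻¹' C` with `α '' B = C`
      set S : Set (Set X) := {B | IsClosed B ∧ α '' B = C} with hS
      have hpre : α ⁻¹' C ∈ S :=
        ⟨hCcl.preimage hαc, by
          apply Set.image_preimage_eq_of_subset
          intro y _; exact hαs y⟩
      obtain ⟨B, -, hBmin⟩ := zorn_superset_nonempty S (fun c hcS hchain hcne => by
        refine ⟨⋂₀ c, ⟨isClosed_sInter fun B hB => (hcS hB).1, ?_⟩, fun s hs => Set.sInter_subset_of_mem hs⟩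
        apply Set.Subset.antisymm
        · obtain ⟨B₀, hB₀⟩ := hcne
          calc α '' ⋂₀ c ⊆ α '' B₀ := Set.image_mono (Set.sInter_subset_of_mem hB₀)
            _ = C := (hcS hB₀).2
        · intro y hy
          have : Nonempty c := Set.Nonempty.to_subtype hcne
          have hne : (⋂ B : c, ((B : Set X) ∩ α ⁻¹' {y})).Nonempty := by
            apply IsCompact.nonempty_iInter_of_directed_nonempty_isCompact_isClosed
            · rintro ⟨B₁, hB₁⟩ ⟨B₂, hB₂⟩
              rcases hchain.total hB₁ hB₂ with h | h
              · exact ⟨⟨B₁, hB₁⟩, Set.Subset.rfl, Set.inter_subset_inter_left _ h⟩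
              · exact ⟨⟨B₂, hB₂⟩, Set.inter_subset_inter_left _ h, Set.Subset.rfl⟩
            · rintro ⟨B, hB⟩
              have : y ∈ α '' B := ((hcS hB).2).symm ▸ hy
              obtain ⟨x, hxB, hxy⟩ := this
              exact ⟨x, hxB, hxy⟩
            · rintro ⟨B, hB⟩
              exact ((hcS hB).1.inter (isClosed_singleton.preimage hαc)).isCompact
            · rintro ⟨B, hB⟩
              exact (hcS hB).1.inter (isClosed_singleton.preimage hαc)
          obtain ⟨x, hx⟩ := hne
          simp only [Set.mem_iInter, Set.mem_inter_iff, Set.mem_preimage,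
            Set.mem_singleton_iff] at hx
          refine ⟨x, ?_, (hx ⟨_, hcne.choose_spec⟩).2⟩
          rw [Set.mem_sInter]
          intro B hB
          exact (hx ⟨B, hB⟩).1) _ hpre
      obtain ⟨hBcl, hBim⟩ := hBmin.prop
      have hBne : B.Nonempty := by
        obtain ⟨y, hy⟩ := hCne
        have : y ∈ α '' B := hBim ▸ hy
        obtain ⟨x, hx, -⟩ := this
        exact ⟨x, hx⟩
      obtain ⟨U, hUo, hUne, hUsm⟩ := hf B hBne ε hε
      -- B \ U does not map onto C
      have hKcl : IsClosed (B \ U) := hBcl.sdiff hUo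
      have hKne : α '' (B \ U) ≠ C := by
        intro hK
        have := hBmin.eq_of_subset ⟨hKcl, hK⟩ Set.diff_subset
        obtain ⟨x, hxU, hxB⟩ := hUne
        rw [← this] at hxB
        exact hxB.2 hxU
      have hKC : α '' (B \ U) ⊆ C := by rw [← hBim]; exact Set.image_mono Set.diff_subset
      have hKclosed : IsClosed (α '' (B \ U)) :=
        (hKcl.isCompact.image hαc).isClosed
      obtain ⟨y₀, hy₀C, hy₀K⟩ : ∃ y₀ ∈ C, y₀ ∉ α '' (B \ U) := by
        by_contra h
        push_neg at h
        exact hKne (Set.Subset.antisymm hKC h)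
      refine ⟨(α '' (B \ U))ᶜ, hKclosed.isOpen_compl, ⟨y₀, hy₀K, hy₀C⟩, ?_⟩
      have key : ∀ y ∈ (α '' (B \ U))ᶜ ∩ C, ∃ x ∈ U ∩ B, α x = y := by
        rintro y ⟨hyK, hyC⟩
        have : y ∈ α '' B := hBim ▸ hyC
        obtain ⟨x, hxB, hxy⟩ := this
        have hxU : x ∈ U := by
          by_contra hxU
          exact hyK ⟨x, ⟨hxB, hxU⟩, hxy⟩
        exact ⟨x, ⟨hxU, hxB⟩, hxy⟩
      rintro y₁ hy₁ y₂ hy₂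
      obtain ⟨x₁, hx₁, hx₁y⟩ := key y₁ hy₁
      obtain ⟨x₂, hx₂, hx₂y⟩ := key y₂ hy₂
      have := hUsm x₁ hx₁ x₂ hx₂
      rwa [hfe, hfe, hx₁y, hx₂y] at this
    -- now go from `closure A₀` back to `A₀`
    obtain ⟨y, hyO, hyC⟩ := hOne
    have hne : (O ∩ A₀).Nonempty := by
      obtain ⟨z, hz⟩ := mem_closure_iff.mp hyC O hOo hyO
      exact ⟨z, hz⟩
    refine ⟨O, hOo, hne, fun x hx y' hy' => ?_⟩
    exact hOsm x ⟨hx.1, subset_closure hx.2⟩ y' ⟨hy'.1, subset_closure hy'.2⟩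
  · -- easy direction
    intro hf' A hA ε hε
    obtain ⟨O', hO'o, hO'ne, hO'sm⟩ := hf' (α '' A) (hA.image α) ε hε
    refine ⟨α ⁻¹' O', hO'o.preimage hαc, ?_, ?_⟩
    · obtain ⟨y, hyO, x, hxA, hxy⟩ := hO'ne
      exact ⟨x, by simpa [hxy] using hyO, hxA⟩
    · rintro x ⟨hxO, hxA⟩ y ⟨hyO, hyA⟩
      have := hO'sm (α x) ⟨hxO, ⟨x, hxA, rfl⟩⟩ (α y) ⟨hyO, ⟨y, hyA, rfl⟩⟩
      rwa [hfe x, hfe y]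
end

section
/- If X is a Baire topological space, (Y, ρ) a pseudometric space, and f : X → Y is fragmented, then the set of points of continuity of f is a dense G_δ subset of X. -/
/-- A map `f : X → Y` into a pseudometric space is *fragmented* if for every nonempty
subset `A` of `X` and every `ε > 0` there is an open set `O` with `O ∩ A` nonempty and
the diameter of `f (O ∩ A)` at most `ε`. -/
def FragmentedPseudo {X Y : Type*} [TopologicalSpace X] [PseudoMetricSpace Y] (f : X → Y) :
    Prop :=
  ∀ A : Set X, A.Nonempty → ∀ ε > (0 : ℝ), ∃ O : Set X, IsOpen O ∧ (O ∩ A).Nonempty ∧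
    ∀ x ∈ O ∩ A, ∀ y ∈ O ∩ A, dist (f x) (f y) ≤ ε

/-- If `X` is a Baire space, `Y` pseudometric and `f : X → Y` is fragmented, then the set
of continuity points of `f` is a dense `G_δ` subset of `X`. -/
theorem fragmented_continuityPoints_denseGdelta {X Y : Type*} [TopologicalSpace X]
    [BaireSpace X] [PseudoMetricSpace Y] (f : X → Y) (hf : FragmentedPseudo f) :
    Dense {x : X | ContinuousAt f x} ∧ IsGδ {x : X | ContinuousAt f x} := by
  refine ⟨?_, IsGδ.setOf_continuousAt f⟩
  set W : ℝ → Set X := fun ε =>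
    {x | ∃ O : Set X, IsOpen O ∧ x ∈ O ∧ ∀ a ∈ O, ∀ b ∈ O, dist (f a) (f b) ≤ ε} with hW
  have hWopen : ∀ ε, IsOpen (W ε) := by
    intro ε
    rw [isOpen_iff_mem_nhds]
    rintro x ⟨O, hO, hxO, hdiam⟩
    exact Filter.mem_of_superset (hO.mem_nhds hxO) fun y hy => ⟨O, hO, hy, hdiam⟩
  have hWdense : ∀ ε > (0 : ℝ), Dense (W ε) := by
    intro ε hε
    rw [dense_iff_inter_open]
    intro V hV hVne
    obtain ⟨O, hO, hne, hdiam⟩ := hf V hVne ε hε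
    obtain ⟨x, hxO, hxV⟩ := hne
    refine ⟨x, hxV, O ∩ V, hO.inter hV, ⟨hxO, hxV⟩, ?_⟩
    intro a ha b hb
    exact hdiam a ha b hb
  have hsub : (⋂ n : ℕ, W (1 / (n + 1))) ⊆ {x | ContinuousAt f x} := by
    intro x hx
    simp only [Set.mem_setOf_eq, ContinuousAt, Metric.tendsto_nhds]
    intro ε hε
    obtain ⟨n, hn⟩ := exists_nat_one_div_lt hε
    obtain ⟨O, hO, hxO, hdiam⟩ := Set.mem_iInter.1 hx n
    filter_upwards [hO.mem_nhds hxO] with y hy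
    exact lt_of_le_of_lt (hdiam y hy x hxO) hn
  refine Dense.mono hsub ?_
  exact dense_iInter_of_isOpen (fun n => hWopen _)
    (fun n => hWdense _ (by positivity))
end

section
/- Let X be a hereditarily Baire topological space and (Y, ρ) a pseudometric space. A map f : X → Y is fragmented if and only if f is barely continuous. -/
/-- `f : X → Y` is *barely continuous* if for every nonempty closed `A ⊆ X` the
restriction `f|_A` has a point of continuity. -/
def BarelyContinuous {X Y : Type*} [TopologicalSpace X] [TopologicalSpace Y]
    (f : X → Y) : Prop :=
  ∀ A : Set X, IsClosed A → A.Nonempty → ∃ a ∈ A, ContinuousWithinAt f A a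

/-- On a hereditarily Baire space, a map into a pseudometric space is fragmented iff it
is barely continuous. -/
theorem fragmented_iff_barelyContinuous {X Y : Type*} [TopologicalSpace X]
    [PseudoMetricSpace Y]
    (hX : ∀ A : Set X, IsClosed A → A.Nonempty → BaireSpace A)
    (f : X → Y) : FragmentedPseudo f ↔ BarelyContinuous f := by
  constructor
  · -- fragmented → barely continuous
    intro hf A hAc hAne
    haveI := hX A hAc hAne
    haveI : Nonempty A := hAne.to_subtype
    -- open sets witnessing small oscillation
    set U : ℕ → Set X := fun n =>
      ⋃₀ {O : Set X | IsOpen O ∧ ∀ x ∈ O ∩ A, ∀ y ∈ O ∩ A, dist (f x) (f y) ≤ 1 / (n + 1)}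
      with hU
    have hUopen : ∀ n, IsOpen (U n) := fun n =>
      isOpen_sUnion fun O hO => hO.1
    set g : ℕ → Set A := fun n => Subtype.val ⁻¹' U n with hg
    have hgopen : ∀ n, IsOpen (g n) := fun n =>
      (hUopen n).preimage continuous_subtype_val
    have hgdense : ∀ n, Dense (g n) := by
      intro n
      rw [dense_iff_inter_open]
      rintro W hW hWne
      rcases isOpen_induced_iff.1 hW with ⟨V, hV, rfl⟩
      rcases hWne with ⟨⟨a, haA⟩, haV⟩
      have hVA : (V ∩ A).Nonempty := ⟨a, haV, haA⟩
      have hε : (0 : ℝ) < 1 / (n + 1) := by positivity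
      rcases hf (V ∩ A) hVA _ hε with ⟨O, hO, ⟨x, hxO, hxV, hxA⟩, hdiam⟩
      refine ⟨⟨x, hxA⟩, hxV, ?_⟩
      refine Set.mem_preimage.2 (Set.mem_sUnion.2 ⟨O ∩ V, ⟨hO.inter hV, ?_⟩, hxO, hxV⟩)
      intro p hp q hq
      exact hdiam p ⟨hp.1.1, hp.1.2, hp.2⟩ q ⟨hq.1.1, hq.1.2, hq.2⟩
    have hdense : Dense (⋂ n, g n) := dense_iInter_of_isOpen hgopen hgdense
    rcases hdense.nonempty with ⟨⟨a, haA⟩, ha⟩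
    refine ⟨a, haA, ?_⟩
    rw [ContinuousWithinAt, Metric.tendsto_nhds]
    intro ε hε
    rcases exists_nat_one_div_lt hε with ⟨n, hn⟩
    have han : (⟨a, haA⟩ : A) ∈ g n := Set.mem_iInter.1 ha n
    rcases Set.mem_sUnion.1 han with ⟨O, ⟨hO, hOd⟩, haO⟩
    filter_upwards [mem_nhdsWithin.2 ⟨O, hO, haO, Set.Subset.rfl⟩] with x hx
    exact lt_of_le_of_lt (hOd x hx a ⟨haO, haA⟩) hn
  · -- barely continuous → fragmented
    intro hf A hAne ε hε
    rcases hf (closure A) isClosed_closure (hAne.mono subset_closure) with ⟨a, haC, hcont⟩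
    have : {y : Y | dist y (f a) < ε / 2} ∈ nhds (f a) :=
      Metric.ball_mem_nhds _ (by linarith)
    rcases mem_nhdsWithin.1 (hcont this) with ⟨O, hO, haO, hsub⟩
    have hOA : (O ∩ A).Nonempty := by
      rcases mem_closure_iff.1 haC O hO haO with ⟨x, hxO, hxA⟩
      exact ⟨x, hxO, hxA⟩
    refine ⟨O, hO, hOA, ?_⟩
    intro x hx y hy
    have hx' : dist (f x) (f a) < ε / 2 := hsub ⟨hx.1, subset_closure hx.2⟩
    have hy' : dist (f y) (f a) < ε / 2 := hsub ⟨hy.1, subset_closure hy.2⟩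
    calc dist (f x) (f y) ≤ dist (f x) (f a) + dist (f a) (f y) := dist_triangle _ _ _
      _ ≤ ε := by rw [dist_comm (f a)] ; linarith
end

section
/- Let F be a fragmented family of functions from a topological space (X, τ) to a uniform space (Y, μ). Then the pointwise closure of F in Y^X is also a fragmented family. -/
/-- A family `F` of maps from a topological space `X` to a uniform space `Y` is a
*fragmented family* if for every nonempty subset `A` of `X` and every entourage `ε`
there is an open set `O` with `O ∩ A` nonempty such that `f (O ∩ A)` is `ε`-small
simultaneously for every `f ∈ F`. -/
def FragmentedFamily {X Y : Type*} [TopologicalSpace X] [UniformSpace Y]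
    (F : Set (X → Y)) : Prop :=
  ∀ A : Set X, A.Nonempty → ∀ ε ∈ uniformity Y, ∃ O : Set X, IsOpen O ∧ (O ∩ A).Nonempty ∧
    ∀ f ∈ F, ∀ x ∈ O ∩ A, ∀ y ∈ O ∩ A, (f x, f y) ∈ ε

/-- The pointwise closure (closure in the product topology on `Y^X`) of a fragmented
family is again a fragmented family. -/
theorem fragmentedFamily_closure {X Y : Type*} [TopologicalSpace X] [UniformSpace Y]
    (F : Set (X → Y)) (hF : FragmentedFamily F) :
    FragmentedFamily (closure F) := by
  intro A hA ε hε
  obtain ⟨ε₁, hε₁, hε₁s, hε₁c⟩ := comp_symm_mem_uniformity_sets hε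
  obtain ⟨ε₂, hε₂, hε₂s, hε₂c⟩ := comp_symm_mem_uniformity_sets hε₁
  obtain ⟨O, hO, hOA, hsmall⟩ := hF A hA ε₂ hε₂
  refine ⟨O, hO, hOA, ?_⟩
  intro g hg x hx y hy
  -- approximate g at x and y by some f ∈ F
  have hV : {h : X → Y | (g x, h x) ∈ ε₂ ∧ (g y, h y) ∈ ε₂} ∈ nhds g := by
    have h1 : Continuous fun h : X → Y => h x := continuous_apply x
    have h2 : Continuous fun h : X → Y => h y := continuous_apply y
    exact Filter.inter_mem
      (h1.continuousAt.preimage_mem_nhds (UniformSpace.ball_mem_nhds (g x) hε₂))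
      (h2.continuousAt.preimage_mem_nhds (UniformSpace.ball_mem_nhds (g y) hε₂))
  obtain ⟨f, hfV, hfF⟩ := mem_closure_iff_nhds.mp hg _ hV
  obtain ⟨hfx, hfy⟩ := hfV
  have hxy : (f x, f y) ∈ ε₂ := hsmall f hfF x hx y hy
  have h1 : (g x, f y) ∈ ε₁ := hε₂c ⟨f x, hfx, hxy⟩
  have h2 : (f y, g y) ∈ ε₁ := hε₂c ⟨f y, refl_mem_uniformity hε₂, hε₂s.symm _ _ hfy⟩
  exact hε₁c ⟨f y, h1, h2⟩
end

section
/- Let F be a compact space, X a Čech-complete space, M a metrizable space, and w : X × F → M a separately continuous map. Then the family of functions {x ↦ w(x, f) : f ∈ F} from X to M is a fragmented family. -/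
universe u

/-- A topological space is *Čech-complete* if it embeds as a dense `G_δ` subset of some
compact Hausdorff space. -/
def CechComplete (X : Type u) [TopologicalSpace X] : Prop :=
  ∃ (K : Type u) (_ : TopologicalSpace K), CompactSpace K ∧ T2Space K ∧
    ∃ e : X → K, Topology.IsEmbedding e ∧ DenseRange e ∧ IsGδ (Set.range e)

open Set Filter Topology

private lemma freq_of_clusterPt {α : Type*} [TopologicalSpace α] {u : ℕ → α} {x : α}
    (h : ClusterPt x (Filter.map u Filter.atTop)) {V : Set α} (hV : IsOpen V) (hxV : x ∈ V)
    (N : ℕ) : ∃ j ≥ N, u j ∈ V := by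
  have hVmem : V ∈ 𝓝 x := hV.mem_nhds hxV
  have htail : u '' Set.Ici N ∈ Filter.map u Filter.atTop :=
    Filter.mem_map.2 (Filter.mem_of_superset (Filter.mem_atTop N)
      (fun j hj => Set.mem_image_of_mem u hj))
  obtain ⟨y, hyV, hyT⟩ := clusterPt_iff_nonempty.1 h hVmem htail
  obtain ⟨j, hj, rfl⟩ := hyT
  exact ⟨j, hj, hyV⟩

/-- The key uniformity lemma (a Namioka-type argument): on some open set meeting `A`,
the "distance profile" of the orbit maps is controlled by finitely many points of `A`. -/
private lemma namioka_key {X : Type u} {F M : Type*}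
    [TopologicalSpace X] (hX : CechComplete X)
    [TopologicalSpace F] [CompactSpace F] [MetricSpace M]
    (w : X × F → M)
    (h1 : ∀ f : F, Continuous fun x : X => w (x, f))
    (h2 : ∀ x : X, Continuous fun f : F => w (x, f))
    (A : Set X) (hA : A.Nonempty) (β : ℝ) (hβ : 0 < β) :
    ∃ (U : Set X) (n : ℕ) (d : ℕ → X) (η : ℝ), IsOpen U ∧ (U ∩ A).Nonempty ∧
      (∀ i, d i ∈ A) ∧ 0 < η ∧
      ∀ a ∈ U ∩ A, ∀ f g : F,
        (∀ i < n, dist (w (d i, f)) (w (d i, g)) ≤ η) →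
        dist (w (a, f)) (w (a, g)) ≤ β := by
  by_contra hcon
  have H : ∀ U : Set X, IsOpen U → (U ∩ A).Nonempty → ∀ (n : ℕ) (d : ℕ → X),
      (∀ i, d i ∈ A) → ∀ η : ℝ, 0 < η →
      ∃ a ∈ U ∩ A, ∃ f g : F,
        (∀ i < n, dist (w (d i, f)) (w (d i, g)) ≤ η) ∧
        β < dist (w (a, f)) (w (a, g)) := by
    intro U hU hUA n d hd η hη
    by_contra hno
    push_neg at hno
    exact hcon ⟨U, n, d, η, hU, hUA, hd, hη, fun a ha f g hfg => hno a ha f g hfg⟩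
  obtain ⟨K, tK, hKc, hKt2, e, he, hde, hGδ⟩ := hX
  haveI := hKc
  haveI := hKt2
  -- an ℕ-indexed family of open sets intersecting to the range of `e`
  obtain ⟨G, hGopen, hGeq⟩ : ∃ G : ℕ → Set K, (∀ n, IsOpen (G n)) ∧ range e = ⋂ n, G n := by
    obtain ⟨T, hTopen, hTcount, hTeq⟩ := hGδ
    rcases T.eq_empty_or_nonempty with hT | hT
    · exact ⟨fun _ => univ, fun _ => isOpen_univ, by simp [hTeq, hT]⟩
    · obtain ⟨G, hGr⟩ := hTcount.exists_eq_range hT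
      refine ⟨G, fun n => hTopen _ (by rw [hGr]; exact mem_range_self n), ?_⟩
      rw [hTeq, hGr, sInter_range]
  -- the one-step construction
  have step : ∀ (n : ℕ) (U : Set K) (a : ℕ → X), IsOpen U → (U ∩ e '' A).Nonempty →
      (∀ i, a i ∈ A) →
      ∃ p : Set K × X × F × F,
        (IsOpen p.1 ∧ (p.1 ∩ e '' A).Nonempty) ∧ p.2.1 ∈ A ∧ e p.2.1 ∈ p.1 ∧
        closure p.1 ⊆ U ∩ G n ∧
        (∀ i < n, dist (w (a i, p.2.2.1)) (w (a i, p.2.2.2)) ≤ 1/(n+1)) ∧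
        β < dist (w (p.2.1, p.2.2.1)) (w (p.2.1, p.2.2.2)) ∧
        (∀ z : X, e z ∈ p.1 → dist (w (z, p.2.2.1)) (w (p.2.1, p.2.2.1)) ≤ β/4 ∧
          dist (w (z, p.2.2.2)) (w (p.2.1, p.2.2.2)) ≤ β/4) := by
    intro n U a hU hUA ha
    have hpreU : IsOpen (e ⁻¹' U) := hU.preimage he.continuous
    have hpreA : ((e ⁻¹' U) ∩ A).Nonempty := by
      obtain ⟨y, hyU, x, hxA, rfl⟩ := hUA
      exact ⟨x, hyU, hxA⟩
    obtain ⟨x, hxUA, f, g, hsmall, hbig⟩ := H (e ⁻¹' U) hpreU hpreA n a ha (1/(n+1))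
      (by positivity)
    have hβ4 : (0:ℝ) < β/4 := by linarith
    set S : Set X := {z | dist (w (z, f)) (w (x, f)) < β/4} ∩
      {z | dist (w (z, g)) (w (x, g)) < β/4} with hS
    have hSopen : IsOpen S :=
      (isOpen_lt ((h1 f).dist continuous_const) continuous_const).inter
        (isOpen_lt ((h1 g).dist continuous_const) continuous_const)
    have hxS : x ∈ S := by
      constructor <;> · simp only [mem_setOf_eq, dist_self]; linarith
    obtain ⟨T, hTopen, hTS⟩ := he.toIsInducing.isOpen_iff.1 hSopen
    have hxGn : e x ∈ G n := by
      have : e x ∈ ⋂ m, G m := hGeq ▸ mem_range_self x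
      exact mem_iInter.1 this n
    have hxT : e x ∈ T := by
      have : x ∈ e ⁻¹' T := hTS.symm ▸ hxS
      exact this
    have hVopen : IsOpen (U ∩ (G n ∩ T)) := hU.inter ((hGopen n).inter hTopen)
    have hxV : e x ∈ U ∩ (G n ∩ T) := ⟨hxUA.1, hxGn, hxT⟩
    obtain ⟨t, htnhds, htclosed, htsub⟩ :=
      exists_mem_nhds_isClosed_subset (hVopen.mem_nhds hxV)
    have hint : e x ∈ interior t := mem_interior_iff_mem_nhds.2 htnhds
    have hclsub : closure (interior t) ⊆ U ∩ (G n ∩ T) := by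
      calc closure (interior t) ⊆ closure t := closure_mono interior_subset
        _ = t := htclosed.closure_eq
        _ ⊆ U ∩ (G n ∩ T) := htsub
    refine ⟨(interior t, x, f, g),
      ⟨isOpen_interior, ⟨e x, hint, x, hxUA.2, rfl⟩⟩, hxUA.2, hint, ?_, hsmall, hbig, ?_⟩
    · exact fun y hy => ⟨(hclsub hy).1, (hclsub hy).2.1⟩
    · intro z hz
      have hzS : z ∈ S := by
        have : e z ∈ T := (hclsub (subset_closure hz)).2.2
        have : z ∈ e ⁻¹' T := this
        rwa [hTS] at this
      exact ⟨le_of_lt hzS.1, le_of_lt hzS.2⟩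
  choose pfun hp using step
  obtain ⟨x₀, hx₀⟩ := hA
  -- the recursively constructed chain
  let St := {q : Set K × (ℕ → X) //
    IsOpen q.1 ∧ (q.1 ∩ e '' A).Nonempty ∧ ∀ i, q.2 i ∈ A}
  have hs₀ : IsOpen (univ : Set K) ∧ ((univ : Set K) ∩ e '' A).Nonempty ∧
      ∀ i : ℕ, (fun _ : ℕ => x₀) i ∈ A :=
    ⟨isOpen_univ, ⟨e x₀, mem_univ _, x₀, hx₀, rfl⟩, fun _ => hx₀⟩
  let stepSt : (n : ℕ) → St → St := fun n s =>
    ⟨((pfun n s.1.1 s.1.2 s.2.1 s.2.2.1 s.2.2.2).1,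
      Function.update s.1.2 n (pfun n s.1.1 s.1.2 s.2.1 s.2.2.1 s.2.2.2).2.1), by
        obtain ⟨hA1, hA2, _⟩ := hp n s.1.1 s.1.2 s.2.1 s.2.2.1 s.2.2.2
        refine ⟨hA1.1, hA1.2, fun i => ?_⟩
        rcases eq_or_ne i n with rfl | hne
        · simp only [Function.update_self]; exact hA2
        · simp only [Function.update_of_ne hne]; exact s.2.2.2 i⟩
  let seq : ℕ → St := fun n => Nat.rec ⟨(univ, fun _ => x₀), hs₀⟩ stepSt n
  let UU : ℕ → Set K := fun n => (seq n).1.1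
  let aa : ℕ → ℕ → X := fun n => (seq n).1.2
  let PP : ℕ → Set K × X × F × F := fun n =>
    pfun n (UU n) (aa n) (seq n).2.1 (seq n).2.2.1 (seq n).2.2.2
  let xx : ℕ → X := fun n => (PP n).2.1
  let ff : ℕ → F := fun n => (PP n).2.2.1
  let gg : ℕ → F := fun n => (PP n).2.2.2
  have hPP : ∀ n, (IsOpen (PP n).1 ∧ ((PP n).1 ∩ e '' A).Nonempty) ∧ xx n ∈ A ∧
      e (xx n) ∈ (PP n).1 ∧ closure (PP n).1 ⊆ UU n ∩ G n ∧
      (∀ i < n, dist (w (aa n i, ff n)) (w (aa n i, gg n)) ≤ 1/(n+1)) ∧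
      β < dist (w (xx n, ff n)) (w (xx n, gg n)) ∧
      (∀ z : X, e z ∈ (PP n).1 → dist (w (z, ff n)) (w (xx n, ff n)) ≤ β/4 ∧
        dist (w (z, gg n)) (w (xx n, gg n)) ≤ β/4) := fun n =>
    hp n (UU n) (aa n) (seq n).2.1 (seq n).2.2.1 (seq n).2.2.2
  have hUU : ∀ n, UU (n+1) = (PP n).1 := fun n => rfl
  have haa : ∀ n, aa (n+1) = Function.update (aa n) n (xx n) := fun n => rfl
  have hxU : ∀ n, e (xx n) ∈ UU (n+1) := fun n => by rw [hUU n]; exact (hPP n).2.2.1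
  have hcl : ∀ n, closure (UU (n+1)) ⊆ UU n ∩ G n := fun n => by
    rw [hUU n]; exact (hPP n).2.2.2.1
  have hbig : ∀ n, β < dist (w (xx n, ff n)) (w (xx n, gg n)) := fun n => (hPP n).2.2.2.2.2.1
  have hstab : ∀ n, ∀ z : X, e z ∈ UU (n+1) →
      dist (w (z, ff n)) (w (xx n, ff n)) ≤ β/4 ∧
      dist (w (z, gg n)) (w (xx n, gg n)) ≤ β/4 := fun n z hz =>
    (hPP n).2.2.2.2.2.2 z (by rwa [hUU n] at hz)
  have haa_lt : ∀ n, ∀ i < n, aa n i = xx i := by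
    intro n
    induction n with
    | zero => intro i hi; omega
    | succ m ih =>
      intro i hi
      rw [haa m]
      rcases eq_or_ne i m with rfl | hne
      · simp only [Function.update_self]
      · simp only [Function.update_of_ne hne]
        exact ih i (by omega)
  have hsmall : ∀ n, ∀ i < n, dist (w (xx i, ff n)) (w (xx i, gg n)) ≤ 1/(n+1) := by
    intro n i hi
    have := (hPP n).2.2.2.2.1 i hi
    rwa [haa_lt n i hi] at this
  have hmono : ∀ n m, n ≤ m → UU m ⊆ UU n := by
    intro n m h
    induction m, h using Nat.le_induction with
    | base => exact subset_rfl
    | succ m hm ih =>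
      exact (subset_closure.trans (hcl m)).trans (inter_subset_left.trans ih)
  -- cluster point in K
  obtain ⟨xhat, hxhat⟩ :=
    exists_clusterPt_of_compactSpace (Filter.map (fun j => e (xx j)) Filter.atTop)
  have hfreqK : ∀ V : Set K, IsOpen V → xhat ∈ V → ∀ N, ∃ j ≥ N, e (xx j) ∈ V :=
    fun V hV hxV N => freq_of_clusterPt hxhat hV hxV N
  have hclos : ∀ m, xhat ∈ closure (UU m) := by
    intro m
    rw [mem_closure_iff]
    intro o ho hxo
    obtain ⟨j, hj, hjo⟩ := hfreqK o ho hxo m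
    exact ⟨e (xx j), hjo, hmono m (j+1) (by omega) (hxU j)⟩
  have hxrange : xhat ∈ range e := by
    rw [hGeq]
    exact mem_iInter.2 fun n => (hcl n (hclos (n+1))).2
  obtain ⟨astar, hastar⟩ := hxrange
  have hfreqX : ∀ S : Set X, IsOpen S → astar ∈ S → ∀ N, ∃ j ≥ N, xx j ∈ S := by
    intro S hS hxS N
    obtain ⟨T, hT, hTS⟩ := he.toIsInducing.isOpen_iff.1 hS
    have hxT : xhat ∈ T := by
      rw [← hastar]
      have : astar ∈ e ⁻¹' T := hTS.symm ▸ hxS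
      exact this
    obtain ⟨j, hj, hjT⟩ := hfreqK T hT hxT N
    refine ⟨j, hj, ?_⟩
    have : xx j ∈ e ⁻¹' T := hjT
    rwa [hTS] at this
  -- cluster point of the function pairs
  obtain ⟨phistar, hphis⟩ :=
    exists_clusterPt_of_compactSpace (Filter.map (fun n => ((ff n, gg n) : F × F)) Filter.atTop)
  have hfreqφ : ∀ V : Set (F × F), IsOpen V → phistar ∈ V → ∀ N, ∃ j ≥ N, (ff j, gg j) ∈ V :=
    fun V hV hxV N => freq_of_clusterPt hphis hV hxV N
  -- the limit pair is null on all constructed points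
  have hnull : ∀ i, dist (w (xx i, phistar.1)) (w (xx i, phistar.2)) = 0 := by
    intro i
    by_contra hne
    have hpos : 0 < dist (w (xx i, phistar.1)) (w (xx i, phistar.2)) :=
      lt_of_le_of_ne dist_nonneg (Ne.symm hne)
    set c := dist (w (xx i, phistar.1)) (w (xx i, phistar.2)) with hc
    have hcont : Continuous fun φ : F × F => dist (w (xx i, φ.1)) (w (xx i, φ.2)) :=
      ((h2 (xx i)).comp continuous_fst).dist ((h2 (xx i)).comp continuous_snd)
    have hVopen : IsOpen {φ : F × F | c/2 < dist (w (xx i, φ.1)) (w (xx i, φ.2))} :=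
      isOpen_lt continuous_const hcont
    obtain ⟨N₀, hN₀⟩ := exists_nat_gt (2/c)
    have hmemV : phistar ∈ {φ : F × F | c/2 < dist (w (xx i, φ.1)) (w (xx i, φ.2))} := by
      simp only [mem_setOf_eq, ← hc]
      linarith
    obtain ⟨j, hj, hjV⟩ := hfreqφ _ hVopen hmemV (max (i+1) N₀)
    have hij : i < j := lt_of_lt_of_le (Nat.lt_succ_self i) (le_trans (le_max_left _ _) hj)
    have hNj : N₀ ≤ j := le_trans (le_max_right _ _) hj
    have h1' : dist (w (xx i, ff j)) (w (xx i, gg j)) ≤ 1/(j+1) := hsmall j i hij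
    have hjV' : c/2 < dist (w (xx i, ff j)) (w (xx i, gg j)) := hjV
    have hN₀pos : (0:ℝ) < N₀ := lt_trans (by positivity) hN₀
    have hcast : (N₀:ℝ) ≤ (j:ℝ) + 1 := by
      have : (N₀:ℝ) ≤ (j:ℝ) := Nat.cast_le.2 hNj
      linarith
    have hone : (1:ℝ)/(j+1) ≤ 1/N₀ := one_div_le_one_div_of_le hN₀pos hcast
    have htwo : (2:ℝ) < N₀ * c := by
      have := (div_lt_iff₀ hpos).1 hN₀
      linarith
    have hthree : (1:ℝ)/N₀ < c/2 := by
      rw [div_lt_div_iff₀ hN₀pos (by norm_num : (0:ℝ) < 2)]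
      linarith
    linarith
  -- hence the limit pair is null at the limit point
  have hzero : dist (w (astar, phistar.1)) (w (astar, phistar.2)) = 0 := by
    have hcont : Continuous fun z : X => dist (w (z, phistar.1)) (w (z, phistar.2)) :=
      (h1 _).dist (h1 _)
    have hcls : IsClosed {z : X | dist (w (z, phistar.1)) (w (z, phistar.2)) = 0} :=
      isClosed_eq hcont continuous_const
    have h₁ : astar ∈ closure (range xx) := by
      rw [mem_closure_iff]
      intro o ho hxo
      obtain ⟨j, _, hj⟩ := hfreqX o ho hxo 0
      exact ⟨xx j, hj, mem_range_self j⟩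
    have h₂ : closure (range xx) ⊆ {z : X | dist (w (z, phistar.1)) (w (z, phistar.2)) = 0} := by
      apply closure_minimal _ hcls
      rintro z ⟨j, rfl⟩
      exact hnull j
    exact h₂ h₁
  -- stabilization transfers to the limit point
  have hstabstar : ∀ n, dist (w (astar, ff n)) (w (xx n, ff n)) ≤ β/4 ∧
      dist (w (astar, gg n)) (w (xx n, gg n)) ≤ β/4 := by
    intro n
    have key : ∀ (φ : F), (∀ z : X, e z ∈ UU (n+1) →
        dist (w (z, φ)) (w (xx n, φ)) ≤ β/4) →
        dist (w (astar, φ)) (w (xx n, φ)) ≤ β/4 := by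
      intro φ hφ
      refine le_of_forall_pos_le_add ?_
      intro ε' hε'
      have hSopen : IsOpen {z : X | dist (w (z, φ)) (w (astar, φ)) < ε'} :=
        isOpen_lt ((h1 φ).dist continuous_const) continuous_const
      have hmem : astar ∈ {z : X | dist (w (z, φ)) (w (astar, φ)) < ε'} := by
        simp only [mem_setOf_eq, dist_self]; linarith
      obtain ⟨j, hj, hjS⟩ := hfreqX _ hSopen hmem (n+1)
      have hjU : e (xx j) ∈ UU (n+1) := hmono (n+1) (j+1) (by omega) (hxU j)
      have h₂ := hφ (xx j) hjU
      calc dist (w (astar, φ)) (w (xx n, φ))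
          ≤ dist (w (astar, φ)) (w (xx j, φ)) + dist (w (xx j, φ)) (w (xx n, φ)) :=
            dist_triangle _ _ _
        _ ≤ ε' + β/4 := add_le_add (by rw [dist_comm]; exact le_of_lt hjS) h₂
        _ = β/4 + ε' := by ring
    exact ⟨key (ff n) (fun z hz => (hstab n z hz).1),
      key (gg n) (fun z hz => (hstab n z hz).2)⟩
  -- final contradiction
  have hΨcont : Continuous fun φ : F × F => dist (w (astar, φ.1)) (w (astar, φ.2)) :=
    ((h2 astar).comp continuous_fst).dist ((h2 astar).comp continuous_snd)
  have hVo : IsOpen {φ : F × F | dist (w (astar, φ.1)) (w (astar, φ.2)) < β/2} :=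
    isOpen_lt hΨcont continuous_const
  have hmemo : phistar ∈ {φ : F × F | dist (w (astar, φ.1)) (w (astar, φ.2)) < β/2} := by
    simp only [mem_setOf_eq]
    rw [hzero]
    linarith
  obtain ⟨n, -, hn⟩ := hfreqφ _ hVo hmemo 0
  have hn' : dist (w (astar, ff n)) (w (astar, gg n)) < β/2 := hn
  have hlow := hbig n
  have h3 := hstabstar n
  have htri : dist (w (xx n, ff n)) (w (xx n, gg n)) ≤
      dist (w (xx n, ff n)) (w (astar, ff n)) + dist (w (astar, ff n)) (w (astar, gg n)) +
        dist (w (astar, gg n)) (w (xx n, gg n)) := dist_triangle4 _ _ _ _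
  have e1 : dist (w (xx n, ff n)) (w (astar, ff n)) =
      dist (w (astar, ff n)) (w (xx n, ff n)) := dist_comm _ _
  linarith [h3.1, h3.2]

/-- If `F` is compact, `X` is Čech-complete, `M` metric and `w : X × F → M` is separately
continuous, then the family `{x ↦ w (x, f) : f ∈ F}` is a fragmented family of maps
`X → M`. -/
theorem fragmentedFamily_of_separatelyContinuous {X : Type u} {F M : Type*}
    [TopologicalSpace X] (hX : CechComplete X)
    [TopologicalSpace F] [CompactSpace F] [MetricSpace M]
    (w : X × F → M)
    (h1 : ∀ f : F, Continuous fun x : X => w (x, f))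
    (h2 : ∀ x : X, Continuous fun f : F => w (x, f)) :
    ∀ A : Set X, A.Nonempty → ∀ ε > (0 : ℝ), ∃ O : Set X, IsOpen O ∧ (O ∩ A).Nonempty ∧
      ∀ f : F, ∀ x ∈ O ∩ A, ∀ y ∈ O ∩ A, dist (w (x, f)) (w (y, f)) ≤ ε := by
  intro A hA ε hε
  obtain ⟨U, n, d, η, hUopen, hUA, hdA, hη, hkey⟩ :=
    namioka_key hX w h1 h2 A hA (ε/4) (by linarith)
  -- a finite η-net for `F` with respect to the points `d i`
  obtain ⟨N, hN⟩ : ∃ N : Finset F, ∀ f : F, ∃ g ∈ N,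
      ∀ i < n, dist (w (d i, f)) (w (d i, g)) ≤ η := by
    have hVo : ∀ g : F, IsOpen {f : F | ∀ i < n, dist (w (d i, f)) (w (d i, g)) < η} := by
      intro g
      have heq : {f : F | ∀ i < n, dist (w (d i, f)) (w (d i, g)) < η} =
          ⋂ i ∈ Finset.range n, {f : F | dist (w (d i, f)) (w (d i, g)) < η} := by
        ext f
        simp [Finset.mem_range]
      rw [heq]
      exact isOpen_biInter_finset fun i _ =>
        isOpen_lt ((h2 (d i)).dist continuous_const) continuous_const
    have hcover : (univ : Set F) ⊆
        ⋃ g : F, {f : F | ∀ i < n, dist (w (d i, f)) (w (d i, g)) < η} := by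
      intro f _
      exact mem_iUnion.2 ⟨f, fun i _ => by simpa [dist_self] using hη⟩
    obtain ⟨N, hN⟩ := isCompact_univ.elim_finite_subcover _ hVo hcover
    refine ⟨N, fun f => ?_⟩
    obtain ⟨g, hgN, hg⟩ := mem_iUnion₂.1 (hN (mem_univ f))
    exact ⟨g, hgN, fun i hi => (hg i hi).le⟩
  obtain ⟨y₀, hy₀U, hy₀A⟩ := hUA
  refine ⟨U ∩ ⋂ g ∈ N, {z : X | dist (w (z, g)) (w (y₀, g)) < ε/8}, ?_, ?_, ?_⟩
  · exact hUopen.inter (isOpen_biInter_finset fun g _ =>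
      isOpen_lt ((h1 g).dist continuous_const) continuous_const)
  · refine ⟨y₀, ⟨hy₀U, ?_⟩, hy₀A⟩
    exact mem_iInter₂.2 fun g _ => by simp only [mem_setOf_eq, dist_self]; linarith
  · rintro f x ⟨⟨hxU, hxI⟩, hxA⟩ y ⟨⟨hyU, hyI⟩, hyA⟩
    obtain ⟨g, hgN, hg⟩ := hN f
    have d1 : dist (w (x, f)) (w (x, g)) ≤ ε/4 := hkey x ⟨hxU, hxA⟩ f g hg
    have d2 : dist (w (x, g)) (w (y₀, g)) < ε/8 := mem_iInter₂.1 hxI g hgN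
    have d3 : dist (w (y, g)) (w (y₀, g)) < ε/8 := mem_iInter₂.1 hyI g hgN
    have d4 : dist (w (y, f)) (w (y, g)) ≤ ε/4 := hkey y ⟨hyU, hyA⟩ f g hg
    have htri : dist (w (x, f)) (w (y, f)) ≤
        dist (w (x, f)) (w (x, g)) + dist (w (x, g)) (w (y₀, g)) +
          dist (w (y₀, g)) (w (y, g)) + dist (w (y, g)) (w (y, f)) := by
      have h4 : dist (w (x, f)) (w (y, g)) ≤
          dist (w (x, f)) (w (x, g)) + dist (w (x, g)) (w (y₀, g)) +
            dist (w (y₀, g)) (w (y, g)) := dist_triangle4 _ _ _ _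
      calc dist (w (x, f)) (w (y, f)) ≤
          dist (w (x, f)) (w (y, g)) + dist (w (y, g)) (w (y, f)) := dist_triangle _ _ _
        _ ≤ _ := by linarith
    have e3 : dist (w (y₀, g)) (w (y, g)) = dist (w (y, g)) (w (y₀, g)) := dist_comm _ _
    have e4 : dist (w (y, g)) (w (y, f)) = dist (w (y, f)) (w (y, g)) := dist_comm _ _
    linarith
end

section
/- Let X be a Polish space and F ⊆ C(X) a uniformly bounded family of continuous real-valued functions. If the pointwise closure of F in ℝ^X is contained in C(X), then this pointwise closure is a compact metrizable subspace of ℝ^X. -/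
/-- Let `X` be a Polish space and `F` a uniformly bounded family of continuous real-valued
functions on `X`. If the pointwise closure of `F` in `ℝ^X` consists of continuous
functions, then this closure is a compact metrizable subspace of `ℝ^X`. -/
theorem closure_compact_metrizable_of_closure_continuous {X : Type*} [TopologicalSpace X]
    [PolishSpace X] (F : Set (X → ℝ)) (hcont : ∀ f ∈ F, Continuous f)
    (C : ℝ) (hbd : ∀ f ∈ F, ∀ x, |f x| ≤ C)
    (hcl : ∀ g ∈ closure F, Continuous g) :
    IsCompact (closure F) ∧ TopologicalSpace.MetrizableSpace (closure F : Set (X → ℝ)) := by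
  -- the big compact box
  have hbox : IsCompact (Set.pi Set.univ (fun _ : X => Set.Icc (-C) C)) :=
    isCompact_univ_pi fun _ => isCompact_Icc
  have hboxcl : IsClosed (Set.pi Set.univ (fun _ : X => Set.Icc (-C) C)) :=
    isClosed_set_pi fun _ _ => isClosed_Icc
  have hsub : F ⊆ Set.pi Set.univ (fun _ : X => Set.Icc (-C) C) := by
    intro f hf x _
    exact abs_le.mp (hbd f hf x)
  have hclsub : closure F ⊆ Set.pi Set.univ (fun _ : X => Set.Icc (-C) C) :=
    closure_minimal hsub hboxcl
  have hcompact : IsCompact (closure F) :=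
    hbox.of_isClosed_subset isClosed_closure hclsub
  refine ⟨hcompact, ?_⟩
  -- countable dense subset
  obtain ⟨D, hDc, hDd⟩ := TopologicalSpace.exists_countable_dense X
  haveI : Countable D := hDc.to_subtype
  haveI : CompactSpace (closure F : Set (X → ℝ)) :=
    isCompact_iff_compactSpace.mp hcompact
  -- restriction map to the countable dense set
  let φ : ↥(closure F) → (D → ℝ) := fun g d => (g : X → ℝ) d
  have hφc : Continuous φ :=
    continuous_pi fun d => (continuous_apply (d : X)).comp continuous_subtype_val
  have hφi : Function.Injective φ := by
    intro g h hgh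
    have hg := hcl g g.2
    have hh := hcl h h.2
    ext1
    exact Continuous.ext_on hDd hg hh fun d hd => congrFun hgh ⟨d, hd⟩
  have hemb := hφc.isClosedEmbedding hφi
  exact hemb.isEmbedding.metrizableSpace
end

section
/- Let X be a Polish space and F ⊆ C(X) a uniformly bounded family of continuous real-valued functions on X. If F is a fragmented family, then every function in the pointwise closure of F in ℝ^X is of Baire class 1. -/
open Filter

/-- A family `F` of real-valued functions on a topological space `X` is a *fragmented
family* if for every nonempty `A ⊆ X` and `ε > 0` there is an open `O` with `O ∩ A`
nonempty such that `f (O ∩ A)` has diameter at most `ε` for every `f ∈ F`. -/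
def FragmentedFamilyR {X : Type*} [TopologicalSpace X] (F : Set (X → ℝ)) : Prop :=
  ∀ A : Set X, A.Nonempty → ∀ ε > (0 : ℝ), ∃ O : Set X, IsOpen O ∧ (O ∩ A).Nonempty ∧
    ∀ f ∈ F, ∀ x ∈ O ∩ A, ∀ y ∈ O ∩ A, |f x - f y| ≤ ε

open Set Metric Filter

universe u

/-- oscillation of `g` on `S` is at most `ε`. -/
def SmallOsc {X : Type u} (g : X → ℝ) (ε : ℝ) (S : Set X) : Prop :=
  ∀ x ∈ S, ∀ y ∈ S, |g x - g y| ≤ ε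

lemma SmallOsc.mono {X : Type u} {g : X → ℝ} {ε : ℝ} {S T : Set X} (h : SmallOsc g ε T)
    (hST : S ⊆ T) : SmallOsc g ε S := fun x hx y hy => h x (hST hx) y (hST hy)

section Aux

variable {X : Type u} [MetricSpace X]

/-- points having an open neighborhood on which `g` has small oscillation relative to `A`. -/
def Wset (g : X → ℝ) (ε : ℝ) (A : Set X) : Set X :=
  {x | ∃ O : Set X, IsOpen O ∧ x ∈ O ∧ SmallOsc g ε (O ∩ A)}

lemma isOpen_Wset (g : X → ℝ) (ε : ℝ) (A : Set X) : IsOpen (Wset g ε A) := by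
  rw [isOpen_iff_mem_nhds]
  rintro x ⟨O, hO, hxO, hsm⟩
  exact Filter.mem_of_superset (hO.mem_nhds hxO) (fun y hy => ⟨O, hO, hy, hsm⟩)

def derivOp (g : X → ℝ) (ε : ℝ) (A : Set X) : Set X := A \ Wset g ε A

lemma isClosed_derivOp (g : X → ℝ) (ε : ℝ) {A : Set X} (hA : IsClosed A) :
    IsClosed (derivOp g ε A) := hA.sdiff (isOpen_Wset g ε A)

lemma derivOp_subset (g : X → ℝ) (ε : ℝ) (A : Set X) : derivOp g ε A ⊆ A := diff_subset

noncomputable def Dseq (g : X → ℝ) (ε : ℝ) : Ordinal.{u} → Set X :=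
  WellFounded.fix Ordinal.lt_wf
    (fun α ih => ⋂ (β : Ordinal.{u}) (h : β < α), derivOp g ε (ih β h))

lemma Dseq_eq (g : X → ℝ) (ε : ℝ) (α : Ordinal.{u}) :
    Dseq g ε α = ⋂ (β : Ordinal.{u}) (h : β < α), derivOp g ε (Dseq g ε β) := by
  rw [Dseq, WellFounded.fix_eq]

lemma mem_Dseq_iff {g : X → ℝ} {ε : ℝ} {α : Ordinal.{u}} {x : X} :
    x ∈ Dseq g ε α ↔ ∀ β < α, x ∈ derivOp g ε (Dseq g ε β) := by
  rw [Dseq_eq]; simp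

lemma Dseq_antitone (g : X → ℝ) (ε : ℝ) : Antitone (Dseq g ε) := by
  intro α β hab
  intro x hx
  rw [mem_Dseq_iff] at hx ⊢
  exact fun γ hγ => hx γ (lt_of_lt_of_le hγ hab)

lemma Dseq_succ_subset (g : X → ℝ) (ε : ℝ) (α : Ordinal.{u}) :
    Dseq g ε (Order.succ α) ⊆ derivOp g ε (Dseq g ε α) := by
  intro x hx
  rw [mem_Dseq_iff] at hx
  exact hx α (Order.lt_succ α)

lemma isClosed_Dseq (g : X → ℝ) (ε : ℝ) (α : Ordinal.{u}) : IsClosed (Dseq g ε α) := by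
  induction α using Ordinal.induction with
  | h α ih =>
    rw [Dseq_eq]
    exact isClosed_iInter fun β => isClosed_iInter fun hβ => isClosed_derivOp g ε (ih β hβ)

section Frag

variable {g : X → ℝ} {ε : ℝ}
variable (hg : ∀ A : Set X, A.Nonempty → ∃ O, IsOpen O ∧ (O ∩ A).Nonempty ∧
  SmallOsc g ε (O ∩ A))

include hg

lemma exists_drop {α : Ordinal.{u}} (h : (Dseq g ε α).Nonempty) :
    ∃ z, z ∈ Dseq g ε α ∧ z ∈ Wset g ε (Dseq g ε α) ∧ z ∉ Dseq g ε (Order.succ α) := by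
  obtain ⟨O, hO, ⟨z, hzO, hzA⟩, hsm⟩ := hg (Dseq g ε α) h
  have hzW : z ∈ Wset g ε (Dseq g ε α) := ⟨O, hO, hzO, hsm⟩
  refine ⟨z, hzA, hzW, fun hz => ?_⟩
  exact (Dseq_succ_subset g ε α hz).2 hzW

lemma exists_empty : ∃ Λ : Ordinal.{u}, Dseq g ε Λ = ∅ := by
  by_contra h
  push_neg at h
  have hne : ∀ α, (Dseq g ε α).Nonempty := h
  have hinj : Function.Injective (Dseq g ε) := by
    intro α β hab
    by_contra hne'
    wlog hlt : α < β generalizing α β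
    · exact this hab.symm (Ne.symm hne') ((Ne.lt_or_gt hne').resolve_left hlt)
    obtain ⟨z, hz1, _, hz2⟩ := exists_drop hg (hne α)
    have : z ∈ Dseq g ε β := hab ▸ hz1
    exact hz2 (Dseq_antitone g ε (Order.succ_le_of_lt hlt) this)
  exact not_injective_of_ordinal (Dseq g ε) hinj

lemma exists_rank (x : X) :
    ∃ β : Ordinal.{u}, x ∈ Dseq g ε β ∧ x ∈ Wset g ε (Dseq g ε β) := by
  obtain ⟨Λ, hΛ⟩ := exists_empty (g := g) (ε := ε) hg
  have hS : {α : Ordinal.{u} | x ∉ Dseq g ε α}.Nonempty := ⟨Λ, by simp [hΛ]⟩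
  set μ := Ordinal.lt_wf.min _ hS with hμdef
  have hμ : x ∉ Dseq g ε μ := Ordinal.lt_wf.min_mem _ hS
  rw [mem_Dseq_iff] at hμ
  push_neg at hμ
  obtain ⟨β, hβμ, hβ⟩ := hμ
  have hxβ : x ∈ Dseq g ε β := by
    by_contra hx
    exact Ordinal.lt_wf.not_lt_min {α : Ordinal.{u} | x ∉ Dseq g ε α} (x := β) hx hβμ
  refine ⟨β, hxβ, ?_⟩
  by_contra hW
  exact hβ ⟨hxβ, hW⟩

end Frag

lemma ball_select {Q : Set X} (hQ : Dense Q) {x : X} {O : Set X} (hO : IsOpen O) (hx : x ∈ O) :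
    ∃ q ∈ Q, ∃ r : ℚ, x ∈ closedBall q (r : ℝ) ∧ closedBall q (r : ℝ) ⊆ O := by
  obtain ⟨δ, hδ, hball⟩ := Metric.isOpen_iff.1 hO x hx
  obtain ⟨q, hqQ, hq⟩ := hQ.exists_dist_lt x (by positivity : (0:ℝ) < δ/4)
  obtain ⟨r, hr1, hr2⟩ := exists_rat_btwn (by linarith : δ/4 < δ/2)
  refine ⟨q, hqQ, r, ?_, ?_⟩
  · rw [mem_closedBall]
    exact (lt_of_lt_of_le hq hr1.le).le
  · intro y hy
    apply hball
    rw [mem_ball]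
    have h1 : dist y q ≤ (r : ℝ) := mem_closedBall.1 hy
    have h2 : dist q x = dist x q := dist_comm q x
    have := dist_triangle y q x
    linarith

section Frag2

variable {g : X → ℝ} {ε : ℝ} {Q : Set X}
variable (hg : ∀ A : Set X, A.Nonempty → ∃ O, IsOpen O ∧ (O ∩ A).Nonempty ∧
  SmallOsc g ε (O ∩ A)) (hQc : Q.Countable) (hQd : Dense Q)

include hg hQc hQd

lemma countable_ranks :
    Countable {β : Ordinal.{u} // (Dseq g ε β).Nonempty} := by
  haveI := hQc.to_subtype
  have key : ∀ β : {β : Ordinal.{u} // (Dseq g ε β).Nonempty},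
      ∃ p : ↥Q × ℚ, ∃ z, z ∈ Dseq g ε β.1 ∧ z ∈ closedBall (p.1 : X) (p.2 : ℝ) ∧
        closedBall (p.1 : X) (p.2 : ℝ) ⊆ (Dseq g ε (Order.succ β.1))ᶜ := by
    rintro ⟨β, hβ⟩
    obtain ⟨z, hz1, _, hz2⟩ := exists_drop hg hβ
    have hopen : IsOpen (Dseq g ε (Order.succ β))ᶜ :=
      (isClosed_Dseq g ε (Order.succ β)).isOpen_compl
    obtain ⟨q, hqQ, r, hz3, hsub⟩ := ball_select hQd hopen hz2
    exact ⟨(⟨q, hqQ⟩, r), z, hz1, hz3, hsub⟩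
  choose φ z hz1 hz2 hz3 using key
  have hφ : Function.Injective φ := by
    rintro β₁ β₂ hφeq
    by_contra hne'
    have hne'' : β₁.1 ≠ β₂.1 := fun h => hne' (Subtype.ext h)
    wlog hlt : β₁.1 < β₂.1 generalizing β₁ β₂
    · exact this hφeq.symm (Ne.symm hne') hne''.symm ((hne''.lt_or_gt).resolve_left hlt)
    have h1 : z β₂ ∈ Dseq g ε (Order.succ β₁.1) :=
      Dseq_antitone g ε (Order.succ_le_of_lt hlt) (hz1 β₂)
    have h2 : z β₂ ∈ closedBall ((φ β₁).1 : X) ((φ β₁).2 : ℝ) := hφeq ▸ hz2 β₂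
    exact hz3 β₁ h2 h1
  exact hφ.countable

theorem exists_countable_closed_cover' :
    ∃ Cov : ℕ → Set X, (∀ k, IsClosed (Cov k)) ∧ (∀ x, ∃ k, x ∈ Cov k) ∧
      ∀ k, SmallOsc g ε (Cov k) := by
  haveI := hQc.to_subtype
  haveI := countable_ranks hg hQc hQd
  set T := {β : Ordinal.{u} // (Dseq g ε β).Nonempty}
  set c : T × ↥Q × ℚ → Set X :=
    fun p => closedBall (p.2.1 : X) (p.2.2 : ℝ) ∩ Dseq g ε p.1.1 with hc
  set S : Set (Set X) := {s | (IsClosed s ∧ SmallOsc g ε s) ∧ s ∈ Set.range c} with hS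
  have hScount : S.Countable := (Set.countable_range c).mono (fun s hs => hs.2)
  have hS'count : (insert (∅ : Set X) S).Countable := hScount.insert _
  obtain ⟨f, hf⟩ := hS'count.exists_eq_range ⟨∅, mem_insert _ _⟩
  refine ⟨f, ?_, ?_, ?_⟩
  · intro k
    have : f k ∈ insert (∅ : Set X) S := by rw [hf]; exact ⟨k, rfl⟩
    rcases this with h | h
    · rw [h]; exact isClosed_empty
    · exact h.1.1
  · intro x
    obtain ⟨β, hxβ, O, hO, hxO, hsm⟩ := exists_rank hg x
    obtain ⟨q, hqQ, r, hxq, hsub⟩ := ball_select hQd hO hxO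
    set s : Set X := closedBall q (r : ℝ) ∩ Dseq g ε β with hsdef
    have hsS : s ∈ S := by
      refine ⟨⟨isClosed_closedBall.inter (isClosed_Dseq g ε β), hsm.mono ?_⟩,
        ⟨(⟨β, ⟨x, hxβ⟩⟩, ⟨q, hqQ⟩, r), rfl⟩⟩
      exact fun y hy => ⟨hsub hy.1, hy.2⟩
    have : s ∈ insert (∅ : Set X) S := mem_insert_of_mem _ hsS
    rw [hf] at this
    obtain ⟨k, hk⟩ := this
    exact ⟨k, hk ▸ ⟨hxq, hxβ⟩⟩
  · intro k
    have : f k ∈ insert (∅ : Set X) S := by rw [hf]; exact ⟨k, rfl⟩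
    rcases this with h | h
    · rw [h]; exact fun x hx => absurd hx (notMem_empty x)
    · exact h.1.2

end Frag2


/-- From a countable closed cover with small oscillation, build an `ε`-approximation `h`
to `g` that is an (eventually constant) pointwise limit of continuous functions. -/
lemma stepB1 (g : X → ℝ) (ε : ℝ) (hε : 0 ≤ ε) (Cov : ℕ → Set X)
    (hcl : ∀ k, IsClosed (Cov k)) (hcov : ∀ x, ∃ k, x ∈ Cov k)
    (hsm : ∀ k, SmallOsc g ε (Cov k)) :
    ∃ (h : X → ℝ) (v : ℕ → X → ℝ), (∀ x, |h x - g x| ≤ ε) ∧ (∀ m, Continuous (v m)) ∧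
      (∀ x, ∀ᶠ m in atTop, v m x = h x) := by
  classical
  -- the chosen value on each piece
  set c : ℕ → ℝ := fun k => if h : (Cov k).Nonempty then g h.choose else 0 with hc
  -- bump functions
  set t : ℕ → ℕ → X → ℝ := fun k m x =>
    if (Cov k).Nonempty then max 0 (1 - (m + 1) * infDist x (Cov k)) else 0 with ht
  have htcont : ∀ k m, Continuous (fun x => t k m x) := by
    intro k m
    by_cases h : (Cov k).Nonempty <;> simp only [ht, h, if_true, if_false]
    · exact continuous_const.max (continuous_const.sub
        (continuous_const.mul (continuous_infDist_pt _)))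
    · exact continuous_const
  have ht01 : ∀ k m x, 0 ≤ t k m x ∧ t k m x ≤ 1 := by
    intro k m x
    by_cases h : (Cov k).Nonempty <;> simp only [ht, h, if_true, if_false]
    · constructor
      · exact le_max_left _ _
      · apply max_le (by norm_num)
        have h1 : (0:ℝ) ≤ (m + 1 : ℝ) * infDist x (Cov k) :=
          mul_nonneg (by positivity) infDist_nonneg
        linarith
    · norm_num
  have htmem : ∀ k m x, x ∈ Cov k → t k m x = 1 := by
    intro k m x hx
    have hne : (Cov k).Nonempty := ⟨x, hx⟩
    simp only [ht, if_pos hne, infDist_zero_of_mem hx, mul_zero, sub_zero]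
    norm_num
  have htnot : ∀ k x, x ∉ Cov k → ∀ᶠ m in atTop, t k m x = 0 := by
    intro k x hx
    by_cases h : (Cov k).Nonempty
    · have hpos : 0 < infDist x (Cov k) := ((hcl k).notMem_iff_infDist_pos h).1 hx
      obtain ⟨M, hM⟩ := exists_nat_gt (1 / infDist x (Cov k))
      filter_upwards [eventually_ge_atTop M] with m hm
      simp only [ht, if_pos h]
      have h1 : 1 / infDist x (Cov k) < (m:ℝ) + 1 := by
        have : (M:ℝ) ≤ m := Nat.cast_le.2 hm
        linarith
      have h2 : 1 < ((m:ℝ) + 1) * infDist x (Cov k) := by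
        rw [div_lt_iff₀ hpos] at h1
        linarith
      exact max_eq_left (by linarith)
    · filter_upwards with m
      simp only [ht, if_neg h]
  -- first-fit partition weights
  set μ : ℕ → ℕ → X → ℝ := fun k m x => t k m x * ∏ j ∈ Finset.range k, (1 - t j m x) with hμ
  set v : ℕ → X → ℝ := fun m x => ∑ k ∈ Finset.range (m + 1), c k * μ k m x with hv
  set h : X → ℝ := fun x => c (Nat.find (hcov x)) with hh
  refine ⟨h, v, ?_, ?_, ?_⟩
  · -- approximation
    intro x
    have hx : x ∈ Cov (Nat.find (hcov x)) := Nat.find_spec (hcov x)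
    set k₀ := Nat.find (hcov x)
    have hne : (Cov k₀).Nonempty := ⟨x, hx⟩
    have : h x = g hne.choose := by simp only [hh, hc]; exact dif_pos hne
    rw [this]
    exact hsm k₀ hne.choose hne.choose_spec x hx
  · -- continuity
    intro m
    apply continuous_finset_sum
    intro k _
    exact continuous_const.mul ((htcont k m).mul
      (continuous_finset_prod _ (fun j _ => continuous_const.sub (htcont j m))))
  · -- eventual equality
    intro x
    set k₀ := Nat.find (hcov x) with hk₀
    have hx : x ∈ Cov k₀ := Nat.find_spec (hcov x)
    have hlt : ∀ j < k₀, x ∉ Cov j := fun j hj => Nat.find_min (hcov x) hj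
    have hzero : ∀ᶠ m in atTop, ∀ j ∈ Finset.range k₀, t j m x = 0 :=
      eventually_all_finset _ |>.2 (fun j hj => htnot j x (hlt j (Finset.mem_range.1 hj)))
    filter_upwards [hzero, eventually_ge_atTop k₀] with m hm hmk
    have hk₀mem : k₀ ∈ Finset.range (m + 1) := Finset.mem_range.2 (Nat.lt_succ_of_le hmk)
    have hterm : ∀ k ∈ Finset.range (m + 1), k ≠ k₀ → c k * μ k m x = 0 := by
      intro k _ hkne
      rcases lt_or_gt_of_ne hkne with hklt | hkgt
      · -- k < k₀ : t k = 0
        have : t k m x = 0 := hm k (Finset.mem_range.2 hklt)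
        simp [hμ, this]
      · -- k > k₀ : product contains factor 1 - t k₀ = 1 - 1 = 0
        have : ∏ j ∈ Finset.range k, (1 - t j m x) = 0 := by
          apply Finset.prod_eq_zero (Finset.mem_range.2 hkgt)
          rw [htmem k₀ m x hx]; ring
        simp [hμ, this]
    show (∑ k ∈ Finset.range (m + 1), c k * μ k m x) = h x
    rw [Finset.sum_eq_single_of_mem k₀ hk₀mem hterm]
    have hμk₀ : μ k₀ m x = 1 := by
      have h1 : t k₀ m x = 1 := htmem k₀ m x hx
      have h2 : ∏ j ∈ Finset.range k₀, (1 - t j m x) = 1 := by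
        apply Finset.prod_eq_one
        intro j hj
        rw [hm j hj]; ring
      simp [hμ, h1, h2]
    rw [hμk₀, mul_one, hh]

lemma geom_Ico_eq (N : ℕ) : ∀ m, N ≤ m →
    ∑ n ∈ Finset.Ico N m, (2⁻¹ : ℝ)^n = 2*((2⁻¹)^N - (2⁻¹)^m) := by
  intro m h
  induction m, h using Nat.le_induction with
  | base => simp
  | succ m hm ih =>
    rw [Finset.sum_Ico_succ_top hm, ih, pow_succ]
    ring

lemma stepB2 (g : X → ℝ)
    (H : ∀ n : ℕ, ∃ (h : X → ℝ) (v : ℕ → X → ℝ), (∀ x, |h x - g x| ≤ (2⁻¹:ℝ)^n) ∧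
      (∀ m, Continuous (v m)) ∧ (∀ x, ∀ᶠ m in atTop, v m x = h x)) :
    ∃ u : ℕ → X → ℝ, (∀ m, Continuous (u m)) ∧
      ∀ x, Tendsto (fun m => u m x) atTop (nhds (g x)) := by
  choose h v happ hcont hev using H
  set B : ℕ → ℝ := fun n => 2 * (2⁻¹:ℝ)^n with hB
  have hBpos : ∀ n, 0 ≤ B n := fun n => by positivity
  set d : ℕ → X → ℝ := fun n x => h (n+1) x - h n x with hd
  have hdb : ∀ n x, |d n x| ≤ B n := by
    intro n x
    have h1 := happ (n+1) x
    have h2 := happ n x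
    have h3 : (2⁻¹:ℝ)^(n+1) ≤ (2⁻¹)^n := by
      rw [pow_succ]
      nlinarith [pow_nonneg (by norm_num : (0:ℝ) ≤ 2⁻¹) n]
    have heq : d n x = (h (n+1) x - g x) - (h n x - g x) := by
      show h (n+1) x - h n x = _; ring
    show |d n x| ≤ 2 * (2⁻¹:ℝ)^n
    rw [heq]
    rw [abs_le] at h1 h2 ⊢
    constructor <;> linarith [h1.1, h1.2, h2.1, h2.2]
  set w : ℕ → ℕ → X → ℝ := fun n m x => max (-(B n)) (min (B n) (v (n+1) m x - v n m x))
    with hw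
  have hwcont : ∀ n m, Continuous (fun x => w n m x) :=
    fun n m => continuous_const.max (continuous_const.min ((hcont (n+1) m).sub (hcont n m)))
  have hwb : ∀ n m x, |w n m x| ≤ B n := by
    intro n m x
    rw [abs_le]
    constructor
    · exact le_max_left _ _
    · exact max_le (by linarith [hBpos n]) (min_le_left _ _)
  have hwev : ∀ n x, ∀ᶠ m in atTop, w n m x = d n x := by
    intro n x
    filter_upwards [hev (n+1) x, hev n x] with m h1 h2
    rw [hw]
    simp only [h1, h2]
    have := hdb n x
    rw [abs_le] at this
    rw [min_eq_right this.2, max_eq_right this.1]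
  refine ⟨fun m x => v 0 m x + ∑ n ∈ Finset.range m, w n m x, ?_, ?_⟩
  · intro m
    exact (hcont 0 m).add (continuous_finset_sum _ (fun n _ => hwcont n m))
  · intro x
    rw [Metric.tendsto_atTop]
    intro η hη
    obtain ⟨N, hN⟩ := exists_pow_lt_of_lt_one (by linarith : (0:ℝ) < η/9) (by norm_num : (2⁻¹:ℝ) < 1)
    have hev0 := hev 0 x
    have hevN : ∀ᶠ m in atTop, ∀ n ∈ Finset.range N, w n m x = d n x :=
      eventually_all_finset _ |>.2 (fun n _ => hwev n x)
    obtain ⟨M, hM⟩ := (hev0.and (hevN.and (eventually_ge_atTop N))).exists_forall_of_atTop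
    refine ⟨M, fun m hm => ?_⟩
    obtain ⟨h0eq, hweq, hmN⟩ := hM m hm
    have htel : h m x = h 0 x + ∑ n ∈ Finset.range m, d n x := by
      rw [hd]
      simp only []
      rw [Finset.sum_range_sub (fun n => h n x)]
      ring
    have key : v 0 m x + ∑ n ∈ Finset.range m, w n m x - g x =
        (∑ n ∈ Finset.Ico N m, (w n m x - d n x)) + (h m x - g x) := by
      have hsplit : Finset.range m = Finset.Ico 0 m := by rw [Finset.range_eq_Ico]
      have hwd : ∑ n ∈ Finset.Ico 0 N, w n m x = ∑ n ∈ Finset.Ico 0 N, d n x := by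
        apply Finset.sum_congr rfl
        intro n hn
        exact hweq n (Finset.mem_range.2 (Finset.mem_Ico.1 hn).2)
      have hdist : ∑ n ∈ Finset.Ico N m, (w n m x - d n x)
          = ∑ n ∈ Finset.Ico N m, w n m x - ∑ n ∈ Finset.Ico N m, d n x :=
        Finset.sum_sub_distrib _ _
      rw [h0eq, htel, hsplit, ← Finset.sum_Ico_consecutive _ (Nat.zero_le N) hmN,
        ← Finset.sum_Ico_consecutive _ (Nat.zero_le N) hmN, hwd, hdist]
      ring
    rw [Real.dist_eq, key]
    have hsum : |∑ n ∈ Finset.Ico N m, (w n m x - d n x)| ≤ 8 * (2⁻¹:ℝ)^N := by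
      calc |∑ n ∈ Finset.Ico N m, (w n m x - d n x)|
          ≤ ∑ n ∈ Finset.Ico N m, |w n m x - d n x| := Finset.abs_sum_le_sum_abs _ _
        _ ≤ ∑ n ∈ Finset.Ico N m, 4 * (2⁻¹:ℝ)^n := by
            apply Finset.sum_le_sum
            intro n _
            have h1 := hwb n m x
            have h2 := hdb n x
            simp only [hB] at h1 h2
            rw [abs_le] at h1 h2 ⊢
            constructor <;> linarith [h1.1, h1.2, h2.1, h2.2]
        _ = 4 * ∑ n ∈ Finset.Ico N m, (2⁻¹:ℝ)^n := by rw [Finset.mul_sum]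
        _ ≤ 4 * (2*((2⁻¹:ℝ)^N - (2⁻¹)^m)) := by
            rw [geom_Ico_eq N m hmN]
        _ ≤ 8 * (2⁻¹:ℝ)^N := by
            have : (0:ℝ) ≤ (2⁻¹:ℝ)^m := by positivity
            linarith
    have hlast : |h m x - g x| ≤ (2⁻¹:ℝ)^N := by
      calc |h m x - g x| ≤ (2⁻¹:ℝ)^m := happ m x
        _ ≤ (2⁻¹:ℝ)^N := pow_le_pow_of_le_one (by norm_num) (by norm_num) hmN
    calc |∑ n ∈ Finset.Ico N m, (w n m x - d n x) + (h m x - g x)|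
        ≤ |∑ n ∈ Finset.Ico N m, (w n m x - d n x)| + |h m x - g x| := abs_add_le _ _
      _ ≤ 8 * (2⁻¹:ℝ)^N + (2⁻¹:ℝ)^N := add_le_add hsum hlast
      _ = 9 * (2⁻¹:ℝ)^N := by ring
      _ < 9 * (η/9) := by linarith [hN]
      _ = η := by ring

end Aux

/-- Let `X` be Polish and `F` a uniformly bounded fragmented family of continuous
real-valued functions on `X`. Then every function in the pointwise closure of `F` in
`ℝ^X` is of Baire class 1 (equivalently, on the Polish space `X`, a pointwise limit of a
sequence of continuous functions). -/
theorem baireOne_of_fragmentedFamily_closure {X : Type*} [TopologicalSpace X]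
    [PolishSpace X] (F : Set (X → ℝ)) (hcont : ∀ f ∈ F, Continuous f)
    (C : ℝ) (hbd : ∀ f ∈ F, ∀ x, |f x| ≤ C) (hfrag : FragmentedFamilyR F) :
    ∀ g ∈ closure F, ∃ u : ℕ → X → ℝ, (∀ n, Continuous (u n)) ∧
      ∀ x, Tendsto (fun n => u n x) atTop (nhds (g x)) := by
  intro g hgcl
  -- `g` itself satisfies the fragmentation property
  have hgfrag : ∀ ε : ℝ, 0 < ε → ∀ A : Set X, A.Nonempty →
      ∃ O, IsOpen O ∧ (O ∩ A).Nonempty ∧ SmallOsc g ε (O ∩ A) := by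
    intro ε hε A hA
    obtain ⟨O, hO, hOA, hsm⟩ := hfrag A hA ε hε
    refine ⟨O, hO, hOA, fun x hx y hy => ?_⟩
    have hKcl : IsClosed {h : X → ℝ | |h x - h y| ≤ ε} := by
      have hcont2 : Continuous fun h : X → ℝ => |h x - h y| :=
        ((continuous_apply x).sub (continuous_apply y)).abs
      exact isClosed_le hcont2 continuous_const
    have : g ∈ {h : X → ℝ | |h x - h y| ≤ ε} :=
      closure_minimal (fun f hf => hsm f hf x hx y hy) hKcl hgcl
    exact this
  -- upgrade to a complete separable metric structure
  letI := TopologicalSpace.upgradeIsCompletelyMetrizable X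
  obtain ⟨Q, hQc, hQd⟩ := TopologicalSpace.exists_countable_dense X
  apply stepB2 g
  intro n
  have hεpos : (0:ℝ) < (2⁻¹:ℝ)^n := by positivity
  obtain ⟨Cov, hcl, hcov, hsm⟩ :=
    exists_countable_closed_cover' (g := g) (ε := (2⁻¹:ℝ)^n)
      (hgfrag _ hεpos) hQc hQd
  exact stepB1 g ((2⁻¹:ℝ)^n) hεpos.le Cov hcl hcov hsm
end

section
/- Let X be a compact metric space and A ⊆ bB₁(X) a uniformly bounded set of bounded Baire 1 functions. The map T sending f to the functional μ ↦ ∫ f dμ on the unit ball B* of C(X)*, is well-defined (each T(f) is a bounded Baire 1 function on B* with the weak* topology), injective, and sequentially continuous on A with respect to pointwise convergence topologies. -/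
open MeasureTheory Filter

/-- A real-valued function on a topological space is *Baire class 1* (in the sense of
pointwise limits) if it is a pointwise limit of a sequence of continuous functions. -/
def BaireOne {Z : Type*} [TopologicalSpace Z] (g : Z → ℝ) : Prop :=
  ∃ u : ℕ → Z → ℝ, (∀ n, Continuous (u n)) ∧
    ∀ z, Tendsto (fun n => u n z) atTop (nhds (g z))

/-- The unit ball `B*` of `C(X)*`, realized via the Riesz representation as the set of
signed Borel measures of total variation at most `1`, here modeled as pairs of (positive)
measures `(μ⁺, μ⁻)` with `μ⁺(X) + μ⁻(X) ≤ 1`. -/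
def Bstar (X : Type*) [TopologicalSpace X] [MeasurableSpace X] :=
  { p : Measure X × Measure X // p.1 Set.univ + p.2 Set.univ ≤ 1 }

/-- The weak* topology on `B*`: the topology of pointwise convergence on `C(X, ℝ)`. -/
noncomputable instance Bstar.topologicalSpace (X : Type*) [TopologicalSpace X] [MeasurableSpace X] :
    TopologicalSpace (Bstar X) :=
  TopologicalSpace.induced
    (fun p : Bstar X => fun g : C(X, ℝ) => (∫ x, g x ∂p.1.1) - ∫ x, g x ∂p.1.2)
    inferInstance

/-- The natural map `T : bB₁(X) → bB₁(B*)`, `f ↦ (μ ↦ ∫ f dμ)`. -/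
noncomputable def Tmap {X : Type*} [TopologicalSpace X] [MeasurableSpace X]
    (f : X → ℝ) (p : Bstar X) : ℝ :=
  (∫ x, f x ∂p.1.1) - ∫ x, f x ∂p.1.2

section aux

variable {X : Type*} [MetricSpace X] [MeasurableSpace X] [BorelSpace X]

lemma BaireOne.measurable' {f : X → ℝ} (h : BaireOne f) : Measurable f := by
  obtain ⟨u, hc, hl⟩ := h
  exact measurable_of_tendsto_metrizable (fun n => (hc n).measurable)
    (tendsto_pi_nhds.mpr hl)

instance Bstar.fin1 (p : Bstar X) : IsFiniteMeasure p.1.1 :=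
  ⟨(le_self_add.trans p.2).trans_lt ENNReal.one_lt_top⟩

instance Bstar.fin2 (p : Bstar X) : IsFiniteMeasure p.1.2 :=
  ⟨(le_add_self.trans p.2).trans_lt ENNReal.one_lt_top⟩

lemma integrable_of_bdd {f : X → ℝ} (hf : Measurable f) {c : ℝ} (hb : ∀ x, |f x| ≤ c)
    (μ : Measure X) [IsFiniteMeasure μ] : Integrable f μ :=
  (integrable_const c).mono' hf.aestronglyMeasurable
    (Eventually.of_forall fun x => by simpa using hb x)

lemma tmap_tendsto {f : ℕ → X → ℝ} {g : X → ℝ} (hf : ∀ n, Measurable (f n))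
    {c : ℝ} (hb : ∀ n x, |f n x| ≤ c)
    (hl : ∀ x, Tendsto (fun n => f n x) atTop (nhds (g x))) (p : Bstar X) :
    Tendsto (fun n => Tmap (f n) p) atTop (nhds (Tmap g p)) := by
  have h1 := tendsto_integral_of_dominated_convergence (μ := p.1.1) (fun _ => c)
    (fun n => (hf n).aestronglyMeasurable) (integrable_const c)
    (fun n => Eventually.of_forall fun x => by simpa using hb n x)
    (Eventually.of_forall hl)
  have h2 := tendsto_integral_of_dominated_convergence (μ := p.1.2) (fun _ => c)
    (fun n => (hf n).aestronglyMeasurable) (integrable_const c)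
    (fun n => Eventually.of_forall fun x => by simpa using hb n x)
    (Eventually.of_forall hl)
  exact h1.sub h2

end aux

/-- Let `X` be compact metric and `A` a uniformly bounded set of bounded Baire 1 functions
on `X`. Then `T : f ↦ (μ ↦ ∫ f dμ)` is well defined (sends bounded Baire 1 functions on
`X` to bounded Baire 1 functions on `B*`), injective on bounded Baire 1 functions, and is
sequentially continuous on `A` with respect to the pointwise convergence topologies. -/
theorem Tmap_wellDefined_injective_seqContinuous {X : Type*} [MetricSpace X]
    [CompactSpace X] [MeasurableSpace X] [BorelSpace X]
    (A : Set (X → ℝ)) (hA1 : ∀ f ∈ A, BaireOne f)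
    (C : ℝ) (hA2 : ∀ f ∈ A, ∀ x, |f x| ≤ C) :
    (∀ f : X → ℝ, BaireOne f → (∃ c, ∀ x, |f x| ≤ c) →
      BaireOne (Tmap f) ∧ ∃ c, ∀ p : Bstar X, |Tmap f p| ≤ c) ∧
    (∀ f g : X → ℝ, BaireOne f → (∃ c, ∀ x, |f x| ≤ c) →
      BaireOne g → (∃ c, ∀ x, |g x| ≤ c) → Tmap f = Tmap g → f = g) ∧
    (∀ (f : ℕ → X → ℝ) (g : X → ℝ), (∀ n, f n ∈ A) → g ∈ A →
      (∀ x, Tendsto (fun n => f n x) atTop (nhds (g x))) →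
      ∀ p : Bstar X, Tendsto (fun n => Tmap (f n) p) atTop (nhds (Tmap g p))) := by
  refine ⟨?wd, ?inj, ?seq⟩
  · -- well-definedness
    rintro f ⟨u, hu, hul⟩ ⟨c, hc⟩
    set c' : ℝ := max c 0 with hc'
    have hc'0 : 0 ≤ c' := le_max_right _ _
    have hfc' : ∀ x, |f x| ≤ c' := fun x => (hc x).trans (le_max_left _ _)
    set tr : ℝ → ℝ := fun t => max (-c') (min c' t) with htr
    have htrc : Continuous tr := by fun_prop
    have htrb : ∀ t, |tr t| ≤ c' := by
      intro t
      rw [abs_le]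
      exact ⟨le_max_left _ _, max_le (by linarith) (min_le_left _ _)⟩
    have htrf : ∀ x, tr (f x) = f x := by
      intro x
      have := abs_le.mp (hfc' x)
      simp only [htr]
      rw [min_eq_right this.2, max_eq_right this.1]
    set v : ℕ → X → ℝ := fun n x => tr (u n x) with hv
    have hvc : ∀ n, Continuous (v n) := fun n => htrc.comp (hu n)
    have hvb : ∀ n x, |v n x| ≤ c' := fun n x => htrb _
    have hvl : ∀ x, Tendsto (fun n => v n x) atTop (nhds (f x)) := by
      intro x
      have := (htrc.tendsto (f x)).comp (hul x)
      rwa [htrf x] at this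
    have hfm : Measurable f := BaireOne.measurable' ⟨v, hvc, hvl⟩
    constructor
    · refine ⟨fun n => Tmap (v n), fun n => ?_, fun p => ?_⟩
      · show Continuous (fun p : Bstar X => Tmap (v n) p)
        have h1 : Continuous (fun p : Bstar X =>
            fun g : C(X, ℝ) => (∫ x, g x ∂p.1.1) - ∫ x, g x ∂p.1.2) := continuous_induced_dom
        exact (continuous_apply (⟨v n, hvc n⟩ : C(X, ℝ))).comp h1
      · exact tmap_tendsto (fun n => (hvc n).measurable) hvb hvl p
    · refine ⟨2 * c', fun p => ?_⟩
      have hi1 : ∀ (μ : Measure X) [IsFiniteMeasure μ], μ Set.univ ≤ 1 → |∫ x, f x ∂μ| ≤ c' := by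
        intro μ _ hle
        have habs : |∫ x, f x ∂μ| ≤ ∫ x, |f x| ∂μ := by
          simpa [Real.norm_eq_abs] using norm_integral_le_integral_norm (μ := μ) f
        calc |∫ x, f x ∂μ| ≤ ∫ x, |f x| ∂μ := habs
          _ ≤ ∫ _x, c' ∂μ := integral_mono ((integrable_of_bdd hfm hfc' μ).abs)
              (integrable_const _) (fun x => hfc' x)
          _ = (μ Set.univ).toReal * c' := by simp [integral_const, smul_eq_mul, measureReal_def]
          _ ≤ 1 * c' := by
            refine mul_le_mul_of_nonneg_right ?_ hc'0
            have := (ENNReal.toReal_le_toReal (measure_ne_top _ _) ENNReal.one_ne_top).mpr hle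
            simpa using this
          _ = c' := one_mul _
      have h1 := hi1 p.1.1 (le_self_add.trans p.2)
      have h2 := hi1 p.1.2 (le_add_self.trans p.2)
      calc |Tmap f p| ≤ |∫ x, f x ∂p.1.1| + |∫ x, f x ∂p.1.2| := abs_sub _ _
        _ ≤ c' + c' := add_le_add h1 h2
        _ = 2 * c' := by ring
  · rintro f g hf ⟨cf, hcf⟩ hg ⟨cg, hcg⟩ hT
    funext x
    have hp : ((Measure.dirac x, 0) : Measure X × Measure X).1 Set.univ +
        ((Measure.dirac x, 0) : Measure X × Measure X).2 Set.univ ≤ 1 := by simp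
    have := congrFun hT ⟨(Measure.dirac x, 0), hp⟩
    simpa [Tmap, integral_dirac] using this
  · intro f g hfA hgA hl p
    exact tmap_tendsto (fun n => (hA1 _ (hfA n)).measurable') (fun n x => hA2 _ (hfA n) x) hl p
end

section
/- Let X be a compact Hausdorff G-space (G a topological group acting continuously) and suppose every element p of the enveloping semigroup E(X) ⊆ X^X is a fragmented self-map of X. Then every factor (continuous equivariant image) Y of X has the same property: every element of E(Y) is a fragmented self-map of Y. -/
/-- The enveloping semigroup `E(X)` of a compact `G`-space: the pointwise closure in
`X^X` of the set of translations `x ↦ g • x`. -/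
def EnvelopingSemigroup (G X : Type*) [TopologicalSpace X] [SMul G X] : Set (X → X) :=
  closure {f : X → X | ∃ g : G, f = fun x => g • x}

/-- Existence of a minimal closed set mapping onto `A`. -/
lemma exists_minimal_closed_onto {X Y : Type*} [TopologicalSpace X] [CompactSpace X]
    [T2Space X] [TopologicalSpace Y] [T1Space Y] (α : X → Y) (hαc : Continuous α)
    (hαs : Function.Surjective α) (A : Set Y) (hA : IsClosed A) :
    ∃ B : Set X, IsClosed B ∧ α '' B = A ∧
      ∀ B' : Set X, IsClosed B' → B' ⊆ B → α '' B' = A → B' = B := by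
  set S : Set (Set X) := {B | IsClosed B ∧ α '' B = A} with hS
  have hx : α ⁻¹' A ∈ S := by
    refine ⟨hA.preimage hαc, ?_⟩
    exact Set.image_preimage_eq_of_subset (by rw [hαs.range_eq]; exact Set.subset_univ _)
  have H : ∀ c ⊆ S, IsChain (· ⊆ ·) c → c.Nonempty → ∃ lb ∈ S, ∀ s ∈ c, lb ⊆ s := by
    intro c hcS hchain hcne
    refine ⟨⋂₀ c, ⟨?_, ?_⟩, fun s hs => Set.sInter_subset_of_mem hs⟩
    · exact isClosed_sInter fun B hB => (hcS hB).1
    · apply Set.Subset.antisymm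
      · obtain ⟨B₀, hB₀⟩ := hcne
        intro y hy
        obtain ⟨x, hx, rfl⟩ := hy
        rw [← (hcS hB₀).2]
        exact ⟨x, hx B₀ hB₀, rfl⟩
      · intro y hyA
        set c' : Set (Set X) := (fun B => B ∩ α ⁻¹' {y}) '' c with hc'
        have hne : (⋂₀ c').Nonempty := by
          have : Nonempty c' := by
            obtain ⟨B₀, hB₀⟩ := hcne
            exact ⟨⟨_, ⟨B₀, hB₀, rfl⟩⟩⟩
          apply IsCompact.nonempty_sInter_of_directed_nonempty_isCompact_isClosed
          · rintro _ ⟨B₁, hB₁, rfl⟩ _ ⟨B₂, hB₂, rfl⟩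
            rcases hchain.total hB₁ hB₂ with h | h
            · exact ⟨_, ⟨B₁, hB₁, rfl⟩, Set.Subset.rfl,
                Set.inter_subset_inter_left _ h⟩
            · exact ⟨_, ⟨B₂, hB₂, rfl⟩, Set.inter_subset_inter_left _ h, Set.Subset.rfl⟩
          · rintro _ ⟨B, hB, rfl⟩
            have : y ∈ α '' B := by rw [(hcS hB).2]; exact hyA
            obtain ⟨x, hxB, hxy⟩ := this
            exact ⟨x, hxB, hxy⟩
          · rintro _ ⟨B, hB, rfl⟩
            exact ((hcS hB).1.inter (isClosed_singleton.preimage hαc)).isCompact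
          · rintro _ ⟨B, hB, rfl⟩
            exact (hcS hB).1.inter (isClosed_singleton.preimage hαc)
        obtain ⟨x, hx⟩ := hne
        have hxy : α x = y := by
          obtain ⟨B₀, hB₀⟩ := hcne
          have := hx _ ⟨B₀, hB₀, rfl⟩
          exact this.2
        refine ⟨x, ?_, hxy⟩
        intro B hB
        exact (hx _ ⟨B, hB, rfl⟩).1
  obtain ⟨m, -, hm⟩ := zorn_superset_nonempty S H _ hx
  exact ⟨m, hm.prop.1, hm.prop.2, fun B' h1 h2 h3 =>
    Set.Subset.antisymm h2 (hm.le_of_le ⟨h1, h3⟩ h2)⟩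

/-- If every element of the enveloping semigroup of a compact Hausdorff `G`-space `X` is
a fragmented self-map (i.e. `X` is tame) and `α : X → Y` is a factor map (a continuous
surjective `G`-map onto a compact Hausdorff `G`-space `Y`), then every element of the
enveloping semigroup of `Y` is a fragmented self-map (i.e. `Y` is tame). -/
theorem tame_factor {G X Y : Type*} [Group G] [TopologicalSpace G]
    [UniformSpace X] [CompactSpace X] [T2Space X] [MulAction G X] [ContinuousSMul G X]
    [UniformSpace Y] [CompactSpace Y] [T2Space Y] [MulAction G Y] [ContinuousSMul G Y]
    (hX : ∀ p ∈ EnvelopingSemigroup G X, Fragmented p)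
    (α : X → Y) (hαc : Continuous α) (hαs : Function.Surjective α)
    (hαG : ∀ (g : G) (x : X), α (g • x) = g • α x) :
    ∀ p ∈ EnvelopingSemigroup G Y, Fragmented p := by
  intro p hp
  -- Step 1: find q ∈ E(X) with α ∘ q = p ∘ α.
  have hαu : UniformContinuous α := CompactSpace.uniformContinuous_of_continuous hαc
  obtain ⟨q, hqE, hqα⟩ : ∃ q ∈ EnvelopingSemigroup G X, α ∘ q = p ∘ α := by
    set Θ : (X → X) → (X → Y) := fun f => α ∘ f with hΘ
    have hΘc : Continuous Θ := continuous_pi fun x => hαc.comp (continuous_apply x)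
    set Ξ : (Y → Y) → (X → Y) := fun h => h ∘ α with hΞ
    have hΞc : Continuous Ξ := continuous_pi fun x => continuous_apply (α x)
    have hKcomp : IsCompact (Θ '' EnvelopingSemigroup G X) := by
      apply IsCompact.image _ hΘc
      exact isClosed_closure.isCompact
    have hKclosed : IsClosed (Θ '' EnvelopingSemigroup G X) := hKcomp.isClosed
    have key : Ξ p ∈ Θ '' EnvelopingSemigroup G X := by
      have h1 : Ξ p ∈ closure (Ξ '' {f : Y → Y | ∃ g : G, f = fun y => g • y}) :=
        image_closure_subset_closure_image hΞc (Set.mem_image_of_mem _ hp)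
      have h2 : Ξ '' {f : Y → Y | ∃ g : G, f = fun y => g • y} ⊆
          Θ '' EnvelopingSemigroup G X := by
        rintro _ ⟨f, ⟨g, rfl⟩, rfl⟩
        refine ⟨fun x => g • x, subset_closure ⟨g, rfl⟩, ?_⟩
        funext x
        exact hαG g x
      have h3 : closure (Ξ '' {f : Y → Y | ∃ g : G, f = fun y => g • y}) ⊆
          Θ '' EnvelopingSemigroup G X := by
        rw [← hKclosed.closure_eq]
        exact closure_mono h2
      exact h3 h1
    obtain ⟨q, hq, hq2⟩ := key
    exact ⟨q, hq, hq2⟩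
  -- Step 2: fragmentedness transfers.
  intro A hAne ε hε
  -- reduce to closed A by passing to the closure
  set Abar := closure A with hAbar
  obtain ⟨B, hBcl, hBA, hBmin⟩ := exists_minimal_closed_onto α hαc hαs Abar isClosed_closure
  have hBne : B.Nonempty := by
    rcases hAne.closure with ⟨y, hy⟩
    have : y ∈ α '' B := by rw [hBA]; exact hy
    obtain ⟨x, hx, -⟩ := this
    exact ⟨x, hx⟩
  have hε' : (Prod.map α α) ⁻¹' ε ∈ uniformity X := hαu hε
  obtain ⟨O, hOopen, hOBne, hOsmall⟩ := hX q hqE B hBne _ hε'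
  -- C = B \ O
  set C := B \ O with hC
  have hCcl : IsClosed C := hBcl.sdiff hOopen
  have hCneq : α '' C ≠ Abar := by
    intro h
    have := hBmin C hCcl Set.diff_subset h
    obtain ⟨x, hxO, hxB⟩ := hOBne
    have : x ∈ C := this ▸ hxB
    exact this.2 hxO
  have hCclosed : IsClosed (α '' C) := (hCcl.isCompact.image hαc).isClosed
  set U := (α '' C)ᶜ with hU
  have hUopen : IsOpen U := hCclosed.isOpen_compl
  have hUAne : (U ∩ A).Nonempty := by
    have hsub : α '' C ⊆ Abar := by rw [← hBA]; exact Set.image_mono Set.diff_subset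
    have : ∃ y ∈ Abar, y ∉ α '' C := by
      by_contra h
      push_neg at h
      exact hCneq (Set.Subset.antisymm hsub h)
    obtain ⟨y, hyAbar, hyC⟩ := this
    -- U is open and meets Abar = closure A, hence meets A
    have : (U ∩ A).Nonempty := by
      have h1 : y ∈ U := hyC
      rcases mem_closure_iff.mp hyAbar U hUopen h1 with ⟨z, hzU, hzA⟩
      exact ⟨z, hzU, hzA⟩
    exact this
  refine ⟨U, hUopen, hUAne, ?_⟩
  have main : ∀ y ∈ U ∩ A, ∃ x ∈ O ∩ B, α x = y := by
    rintro y ⟨hyU, hyA⟩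
    have : y ∈ α '' B := by rw [hBA]; exact subset_closure hyA
    obtain ⟨x, hxB, hxy⟩ := this
    have hxO : x ∈ O := by
      by_contra hxO
      exact hyU ⟨x, ⟨hxB, hxO⟩, hxy⟩
    exact ⟨x, ⟨hxO, hxB⟩, hxy⟩
  intro y hy y' hy'
  obtain ⟨x, hx, rfl⟩ := main y hy
  obtain ⟨x', hx', rfl⟩ := main y' hy'
  have h1 : p (α x) = α (q x) := (congrFun hqα x).symm
  have h2 : p (α x') = α (q x') := (congrFun hqα x').symm
  rw [h1, h2]
  exact hOsmall x hx x' hx'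
end

section
/- Let (X_i) be a family of compact Hausdorff G-spaces such that for each i every element of the enveloping semigroup E(X_i) is a fragmented self-map of X_i. Then the product G-space X = ∏ X_i has the same property: every element of E(X) is a fragmented self-map of X. (In other words, a product of tame G-systems is tame.) -/
/-- A product of tame compact Hausdorff `G`-systems is tame: if every element of each
`E(X i)` is a fragmented self-map, then every element of the enveloping semigroup of the
product `∏ i, X i` (with the diagonal action) is a fragmented self-map. -/
theorem tame_prod {G : Type*} {ι : Type*} {X : ι → Type*} [Group G] [TopologicalSpace G]
    [∀ i, UniformSpace (X i)] [∀ i, CompactSpace (X i)] [∀ i, T2Space (X i)]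
    [∀ i, MulAction G (X i)] [∀ i, ContinuousSMul G (X i)]
    (hX : ∀ i, ∀ p ∈ EnvelopingSemigroup G (X i), Fragmented p) :
    ∀ p ∈ EnvelopingSemigroup G (∀ i, X i), Fragmented p := by
  classical
  intro p hp A hA ε hε
  obtain ⟨a₀, ha₀⟩ := hA
  obtain ⟨U, hTU, hUp⟩ := mem_closure_iff_ultrafilter.1 hp
  -- For each coordinate `i`, produce `q i ∈ E(X i)` with `(p x) i = q i (x i)`.
  have key : ∀ i, ∃ q ∈ EnvelopingSemigroup G (X i),
      ∀ x : ∀ j, X j, (p x) i = q (x i) := by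
    intro i
    set s : X i → ∀ j, X j := fun z => Function.update a₀ i z with hs
    set φ : ((∀ j, X j) → ∀ j, X j) → (X i → X i) := fun f z => f (s z) i with hφ
    have hφc : Continuous φ := by
      apply continuous_pi; intro z
      exact (continuous_apply i).comp (continuous_apply (s z))
    refine ⟨φ p, ?_, ?_⟩
    · refine mem_closure_iff_ultrafilter.2 ⟨U.map φ, ?_, ?_⟩
      · refine Filter.mem_map.2 (Filter.mem_of_superset hTU ?_)
        rintro f ⟨g, rfl⟩
        refine ⟨g, ?_⟩
        funext z
        simp [φ, s, Pi.smul_apply]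
      · exact (hφc.tendsto p).comp hUp
    · intro x
      have hc1 : Continuous fun f : (∀ j, X j) → ∀ j, X j => f x i :=
        (continuous_apply i).comp (continuous_apply x)
      have hc2 : Continuous fun f : (∀ j, X j) → ∀ j, X j => f (s (x i)) i :=
        (continuous_apply i).comp (continuous_apply (s (x i)))
      have h1 : Filter.Tendsto (fun f : (∀ j, X j) → ∀ j, X j => f x i) U (nhds ((p x) i)) :=
        (hc1.tendsto p).mono_left hUp
      have h2 : Filter.Tendsto (fun f : (∀ j, X j) → ∀ j, X j => f (s (x i)) i) U
          (nhds (φ p (x i))) :=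
        (hc2.tendsto p).mono_left hUp
      have heq : (fun f : (∀ j, X j) → ∀ j, X j => f (s (x i)) i)
          =ᶠ[(U : Filter _)] (fun f => f x i) := by
        filter_upwards [hTU] with f hf
        obtain ⟨g, rfl⟩ := hf
        simp [s, Pi.smul_apply]
      exact tendsto_nhds_unique h1 (h2.congr' heq)
  choose q hq hq2 using key
  -- Decompose the entourage of the product uniformity.
  rw [Pi.uniformity] at hε
  obtain ⟨I, hIf, V, hV, -, hεV, -⟩ := Filter.mem_iInf'.1 hε
  choose ε' hε' hsub using fun i => Filter.mem_comap.1 (hV i)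
  -- Find a suitable open set by induction on the finite index set `I`.
  have main : ∀ J : Set ι, J.Finite → ∃ O : Set (∀ j, X j), IsOpen O ∧ (O ∩ A).Nonempty ∧
      ∀ x ∈ O ∩ A, ∀ y ∈ O ∩ A, ∀ i ∈ J, ((p x) i, (p y) i) ∈ ε' i := by
    intro J hJ
    refine Set.Finite.induction_on J hJ
      ⟨Set.univ, isOpen_univ, ⟨a₀, Set.mem_univ _, ha₀⟩, by simp⟩ ?_
    rintro j J' hj hJ' ih
    · obtain ⟨O, hOopen, hOne, hOsmall⟩ := ih
      obtain ⟨Uj, hUo, hUne, hUsmall⟩ :=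
        hX j (q j) (hq j) ((fun x => x j) '' (O ∩ A)) (hOne.image _) (ε' j) (hε' j)
      refine ⟨O ∩ (fun x => x j) ⁻¹' Uj, hOopen.inter (hUo.preimage (continuous_apply j)),
        ?_, ?_⟩
      · obtain ⟨z, hzU, x, hxOA, hxz⟩ := hUne
        exact ⟨x, ⟨hxOA.1, by simpa [hxz] using hzU⟩, hxOA.2⟩
      · rintro x ⟨⟨hxO, hxU⟩, hxA⟩ y ⟨⟨hyO, hyU⟩, hyA⟩ i hi
        rcases Set.mem_insert_iff.1 hi with rfl | hi
        · rw [hq2 i x, hq2 i y]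
          exact hUsmall _ ⟨hxU, ⟨x, ⟨hxO, hxA⟩, rfl⟩⟩ _ ⟨hyU, ⟨y, ⟨hyO, hyA⟩, rfl⟩⟩
        · exact hOsmall x ⟨hxO, hxA⟩ y ⟨hyO, hyA⟩ i hi
  obtain ⟨O, hOopen, hOne, hOsmall⟩ := main I hIf
  refine ⟨O, hOopen, hOne, fun x hx y hy => ?_⟩
  rw [hεV]
  exact Set.mem_iInter₂.2 fun i hi => hsub i (hOsmall x hx y hy i hi)
end
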